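/- arXiv:1005.4935 — 4 statements merged into one kernel-verified Lean document; each statement's English description precedes it below -/
import Mathlib

section
/- Let ψ be an analytic function on 𝔻 with ψ(𝔻) ⊆ 𝔻. Then sup_{|α|<1} ∫_𝔻 (1−|α|²)² |ψ'(z)|² / |1−conj(α)ψ(z)|⁴ dA(z) < ∞ if and only if sup_{|α|<1} ∫_𝔻 (1−|α|²) |ψ'(z)|² / |1−conj(α)ψ(z)|³ dA(z) < ∞. -/
open MeasureTheory Metric Complex

/-- Normalized area measure on the unit disk (total mass 1). -/
noncomputable def dA : Measure ℂ :=
  (ENNReal.ofReal Real.pi)⁻¹ • volume.restrict (ball (0:ℂ) 1)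


lemma dA_pi_ne : (ENNReal.ofReal Real.pi)⁻¹ ≠ 0 := by
  simp [ENNReal.inv_ne_zero]

lemma meas1 (ψ : ℂ → ℂ) (hψ : DifferentiableOn ℂ ψ (ball (0:ℂ) 1)) (β : ℂ) (c : ℝ) (e : ℕ) :
    AEMeasurable (fun z => ENNReal.ofReal (c * ‖deriv ψ z‖ ^ 2 /
      ‖1 - (starRingEnd ℂ) β * ψ z‖ ^ e)) dA := by
  have hΨ : AEMeasurable ψ dA := by
    unfold dA
    rw [aemeasurable_smul_measure_iff dA_pi_ne]
    exact hψ.continuousOn.aemeasurable measurableSet_ball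
  have hd : Measurable fun z => ‖deriv ψ z‖ ^ 2 :=
    ((by continuity : Continuous fun w : ℂ => ‖w‖ ^ 2)).measurable.comp
      (measurable_deriv ψ)
  have h1 : AEMeasurable (fun z => c * ‖deriv ψ z‖ ^ 2 /
      ‖1 - (starRingEnd ℂ) β * ψ z‖ ^ e) dA := by
    apply AEMeasurable.div
    · exact aemeasurable_const.mul hd.aemeasurable
    · have hc : Continuous fun w : ℂ => ‖1 - (starRingEnd ℂ) β * w‖ ^ e := by
        continuity
      exact hc.measurable.comp_aemeasurable hΨ
  exact ENNReal.measurable_ofReal.comp_aemeasurable h1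


noncomputable def akm (α : ℂ) (k : ℕ) : ℂ :=
  ((Real.sqrt (1 - (1/2:ℝ)^k) / ‖α‖ : ℝ) : ℂ) * α

noncomputable def NN (α : ℂ) : ℕ := Nat.log 2 ⌊(4 / (1 - ‖α‖ ^ 2) : ℝ)⌋₊

lemma choose_k {t : ℝ} (h0 : 0 < t) (h2 : t < 2) :
    ∃ k : ℕ, (1/2:ℝ)^k ≤ t ∧ t < 2*(1/2:ℝ)^k := by
  classical
  have hex : ∃ n : ℕ, (1/2:ℝ)^n ≤ t := by
    obtain ⟨n, hn⟩ := exists_pow_lt_of_lt_one h0 (by norm_num : (1/2:ℝ) < 1)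
    exact ⟨n, hn.le⟩
  refine ⟨Nat.find hex, Nat.find_spec hex, ?_⟩
  rcases Nat.eq_zero_or_pos (Nat.find hex) with h | h
  · rw [h]; norm_num; linarith
  · have hm : Nat.find hex - 1 < Nat.find hex := by omega
    have := Nat.find_min hex hm
    push_neg at this
    have heq : (1/2:ℝ)^(Nat.find hex - 1) = 2 * (1/2:ℝ)^(Nat.find hex) := by
      conv_rhs => rw [show Nat.find hex = (Nat.find hex - 1) + 1 by omega]
      rw [pow_succ]
      ring
    linarith [this]

lemma akm_mem (α : ℂ) (ha : ‖α‖ < 1) (k : ℕ) : akm α k ∈ ball (0:ℂ) 1 := by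
  unfold akm
  rcases eq_or_ne α 0 with h | h
  · simp [h]
  · have ha0 : 0 < ‖α‖ := by simpa using h
    have hq0 : (0:ℝ) < (1/2:ℝ)^k := by positivity
    have hr1 : Real.sqrt (1 - (1/2:ℝ)^k) < 1 := by
      have h1 : (1 - (1/2:ℝ)^k) < 1 := by linarith
      nlinarith [Real.sq_sqrt (show (0:ℝ) ≤ 1 - (1/2:ℝ)^k by
        have : (1/2:ℝ)^k ≤ 1 := by
          apply pow_le_one₀ <;> norm_num
        linarith), Real.sqrt_nonneg (1 - (1/2:ℝ)^k)]
    simp only [mem_ball, dist_zero_right, norm_mul, Complex.norm_real, Real.norm_eq_abs]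
    rw [_root_.abs_of_nonneg (by positivity)]
    rw [div_mul_cancel₀ _ ha0.ne']
    exact hr1

set_option maxHeartbeats 1000000 in
lemma pointwise (α : ℂ) (ha : ‖α‖ < 1) (w : ℂ) (hw : ‖w‖ < 1)
    (d2 : ℝ) (hd2 : 0 ≤ d2) :
    ENNReal.ofReal ((1 - ‖α‖ ^ 2) * d2 / ‖1 - (starRingEnd ℂ) α * w‖ ^ 3)
      ≤ 2 * ENNReal.ofReal ((1 - ‖α‖ ^ 2) ^ 2 * d2 /
            ‖1 - (starRingEnd ℂ) α * w‖ ^ 4)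
        + ∑ k ∈ Finset.range (NN α + 1),
            ENNReal.ofReal (64 * (1 - ‖α‖ ^ 2) * 2 ^ k) *
              ENNReal.ofReal ((1 - ‖akm α k‖ ^ 2) ^ 2 * d2 /
                ‖1 - (starRingEnd ℂ) (akm α k) * w‖ ^ 4) := by
  have ha0 : 0 ≤ ‖α‖ := norm_nonneg α
  have hw0 : 0 ≤ ‖w‖ := norm_nonneg w
  set a := ‖α‖ with ha_def
  set s := 1 - a ^ 2 with hs_def
  set t := ‖1 - (starRingEnd ℂ) α * w‖ with ht_def
  have hs : 0 < s := by nlinarith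
  have hs1 : s ≤ 1 := by nlinarith
  have hconj : ‖(starRingEnd ℂ) α * w‖ = a * ‖w‖ := by
    rw [norm_mul, Complex.norm_conj]
  have haw : a * ‖w‖ < 1 := by nlinarith
  have htlow : 1 - a * ‖w‖ ≤ t := by
    have := norm_sub_norm_le (1 : ℂ) ((starRingEnd ℂ) α * w)
    simpa [hconj] using this
  have ht0 : 0 < t := lt_of_lt_of_le (by linarith) htlow
  have ht2 : t < 2 := by
    have := norm_sub_le (1 : ℂ) ((starRingEnd ℂ) α * w)
    skip
    rw [hconj] at this
    simp only [norm_one] at this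
    calc t ≤ 1 + a * ‖w‖ := this
    _ < 2 := by linarith
  have hts : s ≤ 2 * t := by nlinarith [mul_le_of_le_one_right ha0 hw.le, sq_nonneg (1 - a)]
  by_cases hcase : t ≤ 2 * s
  · -- Case A : bounded by first term
    have hre : s * d2 / t ^ 3 ≤ 2 * (s ^ 2 * d2 / t ^ 4) := by
      have e : 2 * (s ^ 2 * d2 / t ^ 4) = 2 * (s ^ 2 * d2) / t ^ 4 := by ring
      rw [e, div_le_div_iff₀ (by positivity) (by positivity)]
      nlinarith [mul_le_mul_of_nonneg_left hcase
        (by positivity : (0:ℝ) ≤ s * d2 * t ^ 3)]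
    have h2 : ENNReal.ofReal (s * d2 / t ^ 3) ≤
        2 * ENNReal.ofReal (s ^ 2 * d2 / t ^ 4) := by
      have := ENNReal.ofReal_le_ofReal hre
      rw [ENNReal.ofReal_mul (by norm_num : (0:ℝ) ≤ 2)] at this
      simpa using this
    exact h2.trans le_self_add
  · -- Case B
    push_neg at hcase
    obtain ⟨k, hk1, hk2⟩ := choose_k ht0 ht2
    set q := (1/2:ℝ)^k with hq_def
    have hq0 : 0 < q := by positivity
    have hq1 : q ≤ 1 := by rw [hq_def]; apply pow_le_one₀ <;> norm_num
    have hsq : s < q := by linarith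
    have ha0' : 0 < a := by nlinarith
    set r := Real.sqrt (1 - q) with hr_def
    have hr0 : 0 ≤ r := Real.sqrt_nonneg _
    have hr2 : r ^ 2 = 1 - q := Real.sq_sqrt (by linarith)
    have hra : r < a := by nlinarith
    have hr1 : r < 1 := lt_trans hra ha
    have habs_akm : ‖akm α k‖ = r := by
      unfold akm
      rw [norm_mul, Complex.norm_real, Real.norm_eq_abs, _root_.abs_of_nonneg (by positivity : (0:ℝ) ≤ r / a)]
      rw [show ‖α‖ = a from rfl, div_mul_cancel₀ _ ha0'.ne']
    have hsub : ‖α - akm α k‖ = a - r := by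
      have e : α - akm α k = ((1 - r / a : ℝ) : ℂ) * α := by
        unfold akm
        rw [← hr_def]
        push_cast
        have : (a : ℂ) ≠ 0 := by exact_mod_cast ha0'.ne'
        field_simp
        simp only [ha_def]
        have h' : ((‖α‖:ℝ):ℂ) ≠ 0 := this
        field_simp
      rw [e, norm_mul, Complex.norm_real, Real.norm_eq_abs, ← ha_def,
        _root_.abs_of_nonneg (by rw [sub_nonneg, div_le_one ha0']; exact hra.le)]
      field_simp
    have har_q : a - r ≤ q := by
      have h1 : r * r ≤ r * 1 := mul_le_mul_of_nonneg_left hr1.le hr0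
      have h2 : r ^ 2 = r * r := sq r
      linarith [ha.le]
    set tk := ‖1 - (starRingEnd ℂ) (akm α k) * w‖ with htk_def
    have h1q : 1 - ‖akm α k‖ ^ 2 = q := by rw [habs_akm, hr2]; ring
    have htk_le : tk ≤ 2 * t := by
      have e : (1:ℂ) - (starRingEnd ℂ) (akm α k) * w =
          (1 - (starRingEnd ℂ) α * w) + ((starRingEnd ℂ) (α - akm α k)) * w := by
        rw [map_sub]; ring
      rw [htk_def, e]
      have h1 := norm_add_le (1 - (starRingEnd ℂ) α * w)
        (((starRingEnd ℂ) (α - akm α k)) * w)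
      have h2 : ‖((starRingEnd ℂ) (α - akm α k)) * w‖ = (a - r) * ‖w‖ := by
        rw [norm_mul, Complex.norm_conj, hsub]
      rw [h2] at h1
      have h3 : (a - r) * ‖w‖ ≤ a - r :=
        mul_le_of_le_one_right (by linarith) hw.le
      calc ‖_‖ ≤ t + (a - r) * ‖w‖ := h1
        _ ≤ t + q := by linarith
        _ ≤ 2 * t := by linarith
    have htk0 : 0 < tk := by
      have hlow : 1 - r * ‖w‖ ≤ tk := by
        have := norm_sub_norm_le (1 : ℂ) ((starRingEnd ℂ) (akm α k) * w)
        simpa [norm_mul, Complex.norm_conj, habs_akm] using this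
      linarith [mul_le_of_le_one_right hr0 hw.le, hr1]
    have hkN : k ∈ Finset.range (NN α + 1) := by
      rw [Finset.mem_range, Nat.lt_succ_iff]
      unfold NN
      have hfl0 : ⌊(4 / s : ℝ)⌋₊ ≠ 0 := by
        have h4 : (1:ℝ) ≤ 4 / s := by rw [le_div_iff₀ hs]; linarith
        intro hcon
        rw [Nat.floor_eq_zero] at hcon
        linarith
      rw [Nat.le_log_iff_pow_le (by norm_num) hfl0]
      apply Nat.le_floor
      have h2q : (2:ℝ)^k * q = 1 := by rw [hq_def, ← mul_pow]; norm_num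
      push_cast
      rw [le_div_iff₀ hs]
      linarith [mul_le_mul_of_nonneg_left hsq.le (by positivity : (0:ℝ) ≤ (2:ℝ)^k), h2q]
    have hterm : ENNReal.ofReal (s * d2 / t ^ 3) ≤
        ENNReal.ofReal (64 * s * 2 ^ k) *
          ENNReal.ofReal ((1 - ‖akm α k‖ ^ 2) ^ 2 * d2 / tk ^ 4) := by
      rw [← ENNReal.ofReal_mul (by positivity)]
      apply ENNReal.ofReal_le_ofReal
      rw [h1q]
      have e0 : 64 * s * 2 ^ k * (q ^ 2 * d2 / tk ^ 4) =
          (64 * s * (2:ℝ) ^ k * (q ^ 2 * d2)) / tk ^ 4 := by ring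
      rw [e0, div_le_div_iff₀ (by positivity) (by positivity)]
      have h2q : (2:ℝ)^k * q = 1 := by rw [hq_def, ← mul_pow]; norm_num
      have htk4 : tk ^ 4 ≤ 16 * t ^ 4 := by
        have h := pow_le_pow_left₀ htk0.le htk_le 4
        have e : (2*t)^4 = 16 * t^4 := by ring
        linarith [h, e]
      have c0 : (0:ℝ) ≤ s * d2 := mul_nonneg hs.le hd2
      calc s * d2 * tk ^ 4 ≤ s * d2 * (16 * t ^ 4) :=
            mul_le_mul_of_nonneg_left htk4 c0
        _ = 16 * (s * d2 * t ^ 3) * t := by ring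
        _ ≤ 16 * (s * d2 * t ^ 3) * (2 * q) :=
            mul_le_mul_of_nonneg_left hk2.le (by positivity)
        _ = 32 * (s * d2 * t ^ 3) * (q * 1) := by ring
        _ = 32 * (s * d2 * t ^ 3) * (q * ((2:ℝ)^k * q)) := by rw [h2q]
        _ ≤ 64 * s * (2:ℝ) ^ k * (q ^ 2 * d2) * t ^ 3 := by
            nlinarith [mul_nonneg (mul_nonneg (mul_nonneg c0 (pow_nonneg ht0.le 3))
              (sq_nonneg q)) (pow_nonneg (by norm_num : (0:ℝ) ≤ 2) k)]
    have hsum : ENNReal.ofReal (64 * s * 2 ^ k) *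
          ENNReal.ofReal ((1 - ‖akm α k‖ ^ 2) ^ 2 * d2 / tk ^ 4) ≤
        ∑ i ∈ Finset.range (NN α + 1),
          ENNReal.ofReal (64 * s * 2 ^ i) *
            ENNReal.ofReal ((1 - ‖akm α i‖ ^ 2) ^ 2 * d2 /
              ‖1 - (starRingEnd ℂ) (akm α i) * w‖ ^ 4) := by
      rw [htk_def]
      exact Finset.single_le_sum
        (f := fun i => ENNReal.ofReal (64 * s * 2 ^ i) *
          ENNReal.ofReal ((1 - ‖akm α i‖ ^ 2) ^ 2 * d2 /
            ‖1 - (starRingEnd ℂ) (akm α i) * w‖ ^ 4))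
        (fun i _ => zero_le) hkN
    exact hterm.trans (hsum.trans le_add_self)


lemma pointwise_easy (α : ℂ) (ha : ‖α‖ < 1) (w : ℂ) (hw : ‖w‖ < 1)
    (d2 : ℝ) (hd2 : 0 ≤ d2) :
    ENNReal.ofReal ((1 - ‖α‖ ^ 2) ^ 2 * d2 /
        ‖1 - (starRingEnd ℂ) α * w‖ ^ 4)
      ≤ 2 * ENNReal.ofReal ((1 - ‖α‖ ^ 2) * d2 /
            ‖1 - (starRingEnd ℂ) α * w‖ ^ 3) := by
  have ha0 : 0 ≤ ‖α‖ := norm_nonneg α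
  have hw0 : 0 ≤ ‖w‖ := norm_nonneg w
  set a := ‖α‖ with ha_def
  set s := 1 - a ^ 2 with hs_def
  set t := ‖1 - (starRingEnd ℂ) α * w‖ with ht_def
  have hs : 0 < s := by nlinarith
  have hconj : ‖(starRingEnd ℂ) α * w‖ = a * ‖w‖ := by
    rw [norm_mul, Complex.norm_conj]
  have haw : a * ‖w‖ < 1 := by nlinarith
  have htlow : 1 - a * ‖w‖ ≤ t := by
    have := norm_sub_norm_le (1 : ℂ) ((starRingEnd ℂ) α * w)
    simpa [hconj] using this
  have ht0 : 0 < t := lt_of_lt_of_le (by linarith) htlow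
  have hts : s ≤ 2 * t := by nlinarith [mul_le_of_le_one_right ha0 hw.le, sq_nonneg (1 - a)]
  have hre : s ^ 2 * d2 / t ^ 4 ≤ 2 * (s * d2 / t ^ 3) := by
    have e : 2 * (s * d2 / t ^ 3) = 2 * (s * d2) / t ^ 3 := by ring
    rw [e, div_le_div_iff₀ (by positivity) (by positivity)]
    nlinarith [mul_le_mul_of_nonneg_left hts (by positivity : (0:ℝ) ≤ s * d2 * t ^ 3)]
  have := ENNReal.ofReal_le_ofReal hre
  rw [ENNReal.ofReal_mul (by norm_num : (0:ℝ) ≤ 2)] at this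
  simpa using this

lemma sum_coeff_le (α : ℂ) (ha : ‖α‖ < 1) :
    ∑ k ∈ Finset.range (NN α + 1),
      ENNReal.ofReal (64 * (1 - ‖α‖ ^ 2) * 2 ^ k) ≤ ENNReal.ofReal 512 := by
  have ha0 : 0 ≤ ‖α‖ := norm_nonneg α
  set s := 1 - ‖α‖ ^ 2 with hs_def
  have hs : 0 < s := by nlinarith
  rw [← ENNReal.ofReal_sum_of_nonneg (fun k _ => by positivity)]
  apply ENNReal.ofReal_le_ofReal
  have e1 : ∑ k ∈ Finset.range (NN α + 1), 64 * s * (2:ℝ) ^ k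
      = 64 * s * ∑ k ∈ Finset.range (NN α + 1), (2:ℝ) ^ k := by
    rw [Finset.mul_sum]
  have hgeom : ∑ k ∈ Finset.range (NN α + 1), (2:ℝ) ^ k = 2 ^ (NN α + 1) - 1 := by
    rw [geom_sum_eq (by norm_num : (2:ℝ) ≠ 1)]
    norm_num
  have hfl0 : ⌊(4 / s : ℝ)⌋₊ ≠ 0 := by
    have h4 : (1:ℝ) ≤ 4 / s := by
      rw [le_div_iff₀ hs]; nlinarith
    intro hcon
    rw [Nat.floor_eq_zero] at hcon
    linarith
  have hNb : (2:ℝ) ^ (NN α) ≤ 4 / s := by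
    have h := Nat.pow_log_le_self 2 hfl0
    have : ((2 ^ (Nat.log 2 ⌊(4 / s : ℝ)⌋₊) : ℕ) : ℝ) ≤ ((⌊(4 / s : ℝ)⌋₊ : ℕ) : ℝ) := by
      exact_mod_cast h
    calc (2:ℝ) ^ (NN α) = ((2 ^ (Nat.log 2 ⌊(4 / s : ℝ)⌋₊) : ℕ) : ℝ) := by
          unfold NN; rw [← hs_def]; push_cast; ring
      _ ≤ ((⌊(4 / s : ℝ)⌋₊ : ℕ) : ℝ) := this
      _ ≤ 4 / s := Nat.floor_le (by positivity)
  have hsN : s * (2:ℝ) ^ (NN α) ≤ 4 := by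
    have := (le_div_iff₀ hs).1 hNb
    linarith
  rw [e1, hgeom, pow_succ]
  nlinarith [hs.le]

lemma dA_ae_ball : ∀ᵐ z ∂dA, z ∈ ball (0:ℂ) 1 := by
  unfold dA
  exact Measure.ae_smul_measure (ae_restrict_mem measurableSet_ball) _

lemma intbound (ψ : ℂ → ℂ) (hψ : DifferentiableOn ℂ ψ (ball (0:ℂ) 1))
    (hmap : Set.MapsTo ψ (ball (0:ℂ) 1) (ball (0:ℂ) 1)) (α : ℂ) (hα : α ∈ ball (0:ℂ) 1) :
    (∫⁻ z, ENNReal.ofReal ((1 - ‖α‖ ^ 2) * ‖deriv ψ z‖ ^ 2 /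
        ‖1 - (starRingEnd ℂ) α * ψ z‖ ^ 3) ∂dA)
      ≤ 2 * (∫⁻ z, ENNReal.ofReal ((1 - ‖α‖ ^ 2) ^ 2 * ‖deriv ψ z‖ ^ 2 /
            ‖1 - (starRingEnd ℂ) α * ψ z‖ ^ 4) ∂dA)
        + ∑ k ∈ Finset.range (NN α + 1),
            ENNReal.ofReal (64 * (1 - ‖α‖ ^ 2) * 2 ^ k) *
              (∫⁻ z, ENNReal.ofReal ((1 - ‖akm α k‖ ^ 2) ^ 2 *
                  ‖deriv ψ z‖ ^ 2 /
                ‖1 - (starRingEnd ℂ) (akm α k) * ψ z‖ ^ 4) ∂dA) := by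
  have hα' : ‖α‖ < 1 := by
    simpa [mem_ball, Complex.dist_eq] using hα
  have step1 : (∫⁻ z, ENNReal.ofReal ((1 - ‖α‖ ^ 2) * ‖deriv ψ z‖ ^ 2 /
        ‖1 - (starRingEnd ℂ) α * ψ z‖ ^ 3) ∂dA)
      ≤ ∫⁻ z, (2 * ENNReal.ofReal ((1 - ‖α‖ ^ 2) ^ 2 * ‖deriv ψ z‖ ^ 2 /
            ‖1 - (starRingEnd ℂ) α * ψ z‖ ^ 4)
          + ∑ k ∈ Finset.range (NN α + 1),
              ENNReal.ofReal (64 * (1 - ‖α‖ ^ 2) * 2 ^ k) *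
                ENNReal.ofReal ((1 - ‖akm α k‖ ^ 2) ^ 2 *
                    ‖deriv ψ z‖ ^ 2 /
                  ‖1 - (starRingEnd ℂ) (akm α k) * ψ z‖ ^ 4)) ∂dA := by
    apply lintegral_mono_ae
    filter_upwards [dA_ae_ball] with z hz
    exact pointwise α hα' (ψ z)
      (by simpa [mem_ball, Complex.dist_eq] using hmap hz) _ (by positivity)
  refine step1.trans (le_of_eq ?_)
  rw [lintegral_add_left' ((meas1 ψ hψ α _ 4).const_mul 2)]
  congr 1
  · exact lintegral_const_mul' 2 _ (by norm_num)
  · rw [lintegral_finset_sum' _ (fun k _ => (meas1 ψ hψ (akm α k) _ 4).const_mul _)]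
    exact Finset.sum_congr rfl (fun k _ => lintegral_const_mul' _ _ ENNReal.ofReal_ne_top)

theorem stmt0 (ψ : ℂ → ℂ) (hψ : DifferentiableOn ℂ ψ (ball (0:ℂ) 1))
    (hmap : Set.MapsTo ψ (ball (0:ℂ) 1) (ball (0:ℂ) 1)) :
    (⨆ α ∈ ball (0:ℂ) 1, ∫⁻ z, ENNReal.ofReal
        ((1 - ‖α‖ ^ 2) ^ 2 * ‖deriv ψ z‖ ^ 2 /
          ‖1 - (starRingEnd ℂ) α * ψ z‖ ^ 4) ∂dA) < ⊤ ↔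
    (⨆ α ∈ ball (0:ℂ) 1, ∫⁻ z, ENNReal.ofReal
        ((1 - ‖α‖ ^ 2) * ‖deriv ψ z‖ ^ 2 /
          ‖1 - (starRingEnd ℂ) α * ψ z‖ ^ 3) ∂dA) < ⊤ := by
  constructor
  · intro h
    set M := ⨆ α ∈ ball (0:ℂ) 1, ∫⁻ z, ENNReal.ofReal
        ((1 - ‖α‖ ^ 2) ^ 2 * ‖deriv ψ z‖ ^ 2 /
          ‖1 - (starRingEnd ℂ) α * ψ z‖ ^ 4) ∂dA with hM
    have key : ∀ α ∈ ball (0:ℂ) 1, (∫⁻ z, ENNReal.ofReal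
        ((1 - ‖α‖ ^ 2) * ‖deriv ψ z‖ ^ 2 /
          ‖1 - (starRingEnd ℂ) α * ψ z‖ ^ 3) ∂dA)
        ≤ (2 + ENNReal.ofReal 512) * M := by
      intro α hα
      have hα' : ‖α‖ < 1 := by
        simpa [mem_ball, Complex.dist_eq] using hα
      have h1 : (∫⁻ z, ENNReal.ofReal
          ((1 - ‖α‖ ^ 2) ^ 2 * ‖deriv ψ z‖ ^ 2 /
            ‖1 - (starRingEnd ℂ) α * ψ z‖ ^ 4) ∂dA) ≤ M :=
        le_iSup₂ (f := fun β (_ : β ∈ ball (0:ℂ) 1) => ∫⁻ z, ENNReal.ofReal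
          ((1 - ‖β‖ ^ 2) ^ 2 * ‖deriv ψ z‖ ^ 2 /
            ‖1 - (starRingEnd ℂ) β * ψ z‖ ^ 4) ∂dA) α hα
      calc (∫⁻ z, ENNReal.ofReal
          ((1 - ‖α‖ ^ 2) * ‖deriv ψ z‖ ^ 2 /
            ‖1 - (starRingEnd ℂ) α * ψ z‖ ^ 3) ∂dA)
          ≤ 2 * (∫⁻ z, ENNReal.ofReal ((1 - ‖α‖ ^ 2) ^ 2 *
                ‖deriv ψ z‖ ^ 2 /
                ‖1 - (starRingEnd ℂ) α * ψ z‖ ^ 4) ∂dA)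
            + ∑ k ∈ Finset.range (NN α + 1),
                ENNReal.ofReal (64 * (1 - ‖α‖ ^ 2) * 2 ^ k) *
                  (∫⁻ z, ENNReal.ofReal ((1 - ‖akm α k‖ ^ 2) ^ 2 *
                      ‖deriv ψ z‖ ^ 2 /
                    ‖1 - (starRingEnd ℂ) (akm α k) * ψ z‖ ^ 4) ∂dA) :=
            intbound ψ hψ hmap α hα
        _ ≤ 2 * M + ∑ k ∈ Finset.range (NN α + 1),
                ENNReal.ofReal (64 * (1 - ‖α‖ ^ 2) * 2 ^ k) * M := by
            refine add_le_add (mul_le_mul_right h1 2) (Finset.sum_le_sum fun k _ => ?_)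
            refine mul_le_mul_right ?_ _
            exact le_iSup₂ (f := fun β (_ : β ∈ ball (0:ℂ) 1) => ∫⁻ z, ENNReal.ofReal
              ((1 - ‖β‖ ^ 2) ^ 2 * ‖deriv ψ z‖ ^ 2 /
                ‖1 - (starRingEnd ℂ) β * ψ z‖ ^ 4) ∂dA)
              (akm α k) (akm_mem α hα' k)
        _ ≤ 2 * M + ENNReal.ofReal 512 * M := by
            refine add_le_add_right ?_ _
            rw [← Finset.sum_mul]
            exact mul_le_mul_left (sum_coeff_le α hα') M
        _ = (2 + ENNReal.ofReal 512) * M := by rw [add_mul]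
    refine lt_of_le_of_lt (iSup₂_le key) ?_
    exact ENNReal.mul_lt_top
      (ENNReal.add_lt_top.2 ⟨by norm_num, ENNReal.ofReal_lt_top⟩) h
  · intro h
    refine lt_of_le_of_lt (iSup₂_le fun α hα => ?_)
      (ENNReal.mul_lt_top (by norm_num : (2:ENNReal) < ⊤) h)
    have hα' : ‖α‖ < 1 := by
      simpa [mem_ball, Complex.dist_eq] using hα
    calc (∫⁻ z, ENNReal.ofReal
        ((1 - ‖α‖ ^ 2) ^ 2 * ‖deriv ψ z‖ ^ 2 /
          ‖1 - (starRingEnd ℂ) α * ψ z‖ ^ 4) ∂dA)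
        ≤ 2 * (∫⁻ z, ENNReal.ofReal
          ((1 - ‖α‖ ^ 2) * ‖deriv ψ z‖ ^ 2 /
            ‖1 - (starRingEnd ℂ) α * ψ z‖ ^ 3) ∂dA) := by
          rw [← lintegral_const_mul' 2 _ (by norm_num)]
          apply lintegral_mono_ae
          filter_upwards [dA_ae_ball] with z hz
          exact pointwise_easy α hα' (ψ z)
            (by simpa [mem_ball, Complex.dist_eq] using hmap hz) _ (by positivity)
      _ ≤ 2 * ⨆ α ∈ ball (0:ℂ) 1, ∫⁻ z, ENNReal.ofReal
          ((1 - ‖α‖ ^ 2) * ‖deriv ψ z‖ ^ 2 /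
            ‖1 - (starRingEnd ℂ) α * ψ z‖ ^ 3) ∂dA := by
          refine mul_le_mul_right ?_ 2
          exact le_iSup₂ (f := fun β (_ : β ∈ ball (0:ℂ) 1) => ∫⁻ z, ENNReal.ofReal
            ((1 - ‖β‖ ^ 2) * ‖deriv ψ z‖ ^ 2 /
              ‖1 - (starRingEnd ℂ) β * ψ z‖ ^ 3) ∂dA) α hα
end

section
/- There exists an absolute constant c > 0 with the following property: for every analytic function f on 𝔻 satisfying f(0) = f'(0) = 0, lim_{ε→0⁺} f(1−ε) = 1 and lim_{ε→0⁺} ε·f'(1−ε) = 0, and for every r ∈ (0, 1/2], one has ∫_{Ω_r} |f''(z)| dA(z) ≥ c·r, where Ω_r = {z : |z| ≤ r} ∪ ⋃_{|z|≤r} [z,1] and [z,1] denotes the closed line segment from z to 1. -/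
open MeasureTheory Metric Complex Filter

/-- `Ω_r = {z : |z| ≤ r} ∪ ⋃_{|z| ≤ r} [z,1]`. -/
def Omega (r : ℝ) : Set ℂ :=
  {z : ℂ | ‖z‖ ≤ r} ∪ ⋃ z ∈ {z : ℂ | ‖z‖ ≤ r}, segment ℝ z 1

section Aux
open Set Real


-- circle mean value
lemma circle_mv {f : ℂ → ℂ} {c : ℂ} {ρ : ℝ} (hρ : 0 < ρ)
    (hc : ContinuousOn f (closedBall c ρ))
    (hd : ∀ z ∈ ball c ρ, DifferentiableAt ℂ f z) :
    2 * π * ‖f c‖ ≤ ∫ θ in (0:ℝ)..(2*π), ‖f (circleMap c ρ θ)‖ := by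
  have key := Complex.circleIntegral_sub_center_inv_smul_of_differentiable_on_off_countable hρ
    Set.countable_empty hc (fun z hz => hd z hz.1)
  have h2 : (∮ z in C(c, ρ), (z - c)⁻¹ • f z) =
      ∫ θ in (0:ℝ)..(2*π), I * f (circleMap c ρ θ) := by
    rw [circleIntegral]
    refine intervalIntegral.integral_congr fun θ _ => ?_
    have hne : circleMap 0 ρ θ ≠ 0 := by simp [circleMap, Complex.exp_ne_zero, hρ.ne']
    simp only [deriv_circleMap, circleMap_sub_center, smul_eq_mul]
    field_simp
  have hnorm : ‖(2 * (π:ℂ) * I) • f c‖ = 2 * π * ‖f c‖ := by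
    simp [norm_smul, Complex.norm_real, abs_of_pos Real.pi_pos, mul_comm]
  calc 2 * π * ‖f c‖ = ‖∫ θ in (0:ℝ)..(2*π), I * f (circleMap c ρ θ)‖ := by
        rw [← h2, key, hnorm]
    _ ≤ ∫ θ in (0:ℝ)..(2*π), ‖I * f (circleMap c ρ θ)‖ :=
        intervalIntegral.norm_integral_le_integral_norm (by positivity)
    _ = ∫ θ in (0:ℝ)..(2*π), ‖f (circleMap c ρ θ)‖ := by
        refine intervalIntegral.integral_congr fun θ _ => ?_
        simp

lemma area_mv {f : ℂ → ℂ} {c : ℂ} {R : ℝ} (hR : 0 < R)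
    (hc : ContinuousOn f (closedBall c R))
    (hd : ∀ z ∈ ball c R, DifferentiableAt ℂ f z) :
    π * R^2 * ‖f c‖ ≤ ∫ w in ball c R, ‖f w‖ := by
  have hsymm : ∀ p : ℝ × ℝ, c + Complex.polarCoord.symm p = circleMap c p.1 p.2 := by
    intro p
    simp [Complex.polarCoord_symm_apply, circleMap, Complex.exp_mul_I]
  set F : ℝ × ℝ → ℝ := fun p => p.1 * ‖f (circleMap c p.1 p.2)‖ with hF
  set S : Set (ℝ × ℝ) := Set.Ioo (0:ℝ) R ×ˢ Set.Ioo (-π) π with hSdef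
  have hScompact : S ⊆ Set.Icc (0:ℝ) R ×ˢ Set.Icc (-π) π :=
    Set.prod_mono Set.Ioo_subset_Icc_self Set.Ioo_subset_Icc_self
  have hcont_phi : Continuous (fun p : ℝ × ℝ => circleMap c p.1 p.2) := by
    simp only [circleMap]
    continuity
  have hFcont : ContinuousOn F (Set.Icc (0:ℝ) R ×ˢ Set.Icc (-π) π) := by
    apply ContinuousOn.mul continuous_fst.continuousOn
    apply ContinuousOn.norm
    apply hc.comp hcont_phi.continuousOn
    intro p hp
    have h0 : dist (circleMap c p.1 p.2) c = |p.1| := by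
      have := circleMap_mem_sphere' c p.1 p.2
      rwa [mem_sphere] at this
    rw [mem_closedBall, h0, _root_.abs_of_nonneg hp.1.1]
    exact hp.1.2
  have hFi : IntegrableOn F S :=
    (hFcont.integrableOn_compact (isCompact_Icc.prod isCompact_Icc)).mono_set hScompact
  -- area integral equals polar integral
  have hA : ∫ w in ball c R, ‖f w‖ = ∫ p in S, F p := by
    have hmem : ∀ x : ℂ, (c + x ∈ ball c R) ↔ x ∈ ball (0:ℂ) R := fun x => by
      simp [mem_ball, dist_eq_norm]
    have h1 : ∫ w in ball c R, ‖f w‖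
        = ∫ w, (ball (0:ℂ) R).indicator (fun w => ‖f (c + w)‖) w := by
      rw [← integral_indicator measurableSet_ball,
        ← integral_add_left_eq_self ((ball c R).indicator (fun w => ‖f w‖)) c]
      congr 1
      funext x
      by_cases hx : x ∈ ball (0:ℂ) R
      · rw [Set.indicator_of_mem hx, Set.indicator_of_mem ((hmem x).2 hx)]
      · rw [Set.indicator_of_notMem hx, Set.indicator_of_notMem (fun h => hx ((hmem x).1 h))]
    have h2 := (Complex.integral_comp_polarCoord_symm
      (fun w => (ball (0:ℂ) R).indicator (fun w => ‖f (c + w)‖) w)).symm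
    have h3 : ∫ p in polarCoord.target,
          p.1 • (ball (0:ℂ) R).indicator (fun w => ‖f (c + w)‖) (Complex.polarCoord.symm p)
        = ∫ p in polarCoord.target, S.indicator F p := by
      apply setIntegral_congr_fun polarCoord.open_target.measurableSet
      intro p hp
      rw [polarCoord_target] at hp
      have hp1 : 0 < p.1 := hp.1
      have habs : ‖Complex.polarCoord.symm p‖ = p.1 := by
        rw [Complex.norm_polarCoord_symm]; exact abs_of_pos hp1
      show p.1 • (ball (0:ℂ) R).indicator (fun w => ‖f (c + w)‖) (Complex.polarCoord.symm p)
          = S.indicator F p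
      by_cases h : p.1 < R
      · have hmemb : Complex.polarCoord.symm p ∈ ball (0:ℂ) R := by
          rw [mem_ball_zero_iff, habs]; exact h
        have hmemS : p ∈ S := ⟨⟨hp1, h⟩, hp.2⟩
        rw [Set.indicator_of_mem hmemb, Set.indicator_of_mem hmemS, hF, smul_eq_mul, hsymm p]
      · have hmemb : Complex.polarCoord.symm p ∉ ball (0:ℂ) R := by
          rw [mem_ball_zero_iff, habs]; exact h
        have hmemS : p ∉ S := fun hs => h hs.1.2
        rw [Set.indicator_of_notMem hmemb, Set.indicator_of_notMem hmemS, smul_zero]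
    have h4 : ∫ p in polarCoord.target, S.indicator F p = ∫ p in S, F p := by
      rw [setIntegral_indicator (measurableSet_Ioo.prod measurableSet_Ioo)]
      congr 1
      rw [Set.inter_eq_self_of_subset_right]
      rw [polarCoord_target]
      exact Set.prod_mono Set.Ioo_subset_Ioi_self subset_rfl
    rw [h1, h2, h3, h4]
  -- Fubini
  have hfub : ∫ p in S, F p = ∫ ρ in Set.Ioo (0:ℝ) R, ∫ θ in Set.Ioo (-π) π, F (ρ, θ) := by
    rw [hSdef] at hFi ⊢
    rw [Measure.volume_eq_prod] at hFi ⊢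
    exact setIntegral_prod F hFi
  -- marginal integrability
  have hmarg : IntegrableOn (fun ρ => ∫ θ in Set.Ioo (-π) π, F (ρ, θ)) (Set.Ioo (0:ℝ) R) := by
    have h := hFi
    rw [hSdef, IntegrableOn, Measure.volume_eq_prod, ← Measure.prod_restrict] at h
    exact h.integral_prod_left
  -- inner bound
  have hinner : ∀ ρ ∈ Set.Ioo (0:ℝ) R, 2 * π * ‖f c‖ * ρ ≤ ∫ θ in Set.Ioo (-π) π, F (ρ, θ) := by
    intro ρ hρ
    have h5 : ∫ θ in Set.Ioo (-π) π, F (ρ, θ) = ρ * ∫ θ in Set.Ioo (-π) π, ‖f (circleMap c ρ θ)‖ := by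
      rw [hF]
      exact integral_const_mul ρ _
    have h6 : ∫ θ in Set.Ioo (-π) π, ‖f (circleMap c ρ θ)‖
        = ∫ θ in (0:ℝ)..(2*π), ‖f (circleMap c ρ θ)‖ := by
      rw [← integral_Ioc_eq_integral_Ioo,
        ← intervalIntegral.integral_of_le (by linarith [Real.pi_pos] : (-π:ℝ) ≤ π)]
      have hper : Function.Periodic (fun θ => ‖f (circleMap c ρ θ)‖) (2*π) := by
        intro θ
        simp only [periodic_circleMap c ρ θ]
      have := hper.intervalIntegral_add_eq (-π) 0
      rw [show -π + 2*π = π by ring, zero_add] at this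
      exact this
    have hcirc := circle_mv hρ.1 (hc.mono (closedBall_subset_closedBall hρ.2.le))
      (fun z hz => hd z (ball_subset_ball hρ.2.le hz))
    rw [h5, h6]
    calc 2 * π * ‖f c‖ * ρ = ρ * (2 * π * ‖f c‖) := by ring
      _ ≤ ρ * ∫ θ in (0:ℝ)..(2*π), ‖f (circleMap c ρ θ)‖ :=
          mul_le_mul_of_nonneg_left hcirc hρ.1.le
  -- outer bound
  have houter : ∫ ρ in Set.Ioo (0:ℝ) R, (2 * π * ‖f c‖ * ρ)
      ≤ ∫ ρ in Set.Ioo (0:ℝ) R, ∫ θ in Set.Ioo (-π) π, F (ρ, θ) := by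
    refine setIntegral_mono_on ?_ hmarg measurableSet_Ioo hinner
    exact ((continuous_const.mul continuous_id).integrableOn_Icc (a := 0) (b := R)).mono_set
      Set.Ioo_subset_Icc_self
  have hval : ∫ ρ in Set.Ioo (0:ℝ) R, (2 * π * ‖f c‖ * ρ) = π * R^2 * ‖f c‖ := by
    rw [← integral_Ioc_eq_integral_Ioo, ← intervalIntegral.integral_of_le hR.le,
      intervalIntegral.integral_const_mul, integral_id]
    ring
  rw [hA, hfub]
  linarith [houter, hval]

lemma step1 {f : ℂ → ℂ} (hf : DifferentiableOn ℂ f (ball (0:ℂ) 1))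
    (hf0 : f 0 = 0) (hf'0 : deriv f 0 = 0)
    (hlim1 : Tendsto (fun ε : ℝ => f (1 - (ε:ℂ))) (nhdsWithin 0 (Set.Ioi 0)) (nhds 1))
    (hlim2 : Tendsto (fun ε : ℝ => (ε:ℂ) * deriv f (1 - (ε:ℂ))) (nhdsWithin 0 (Set.Ioi 0))
      (nhds 0)) :
    1 ≤ ∫⁻ x in Set.Ioo (0:ℝ) 1, ENNReal.ofReal ((1 - x) * ‖deriv (deriv f) x‖) := by
  set g : ℂ → ℂ := deriv (deriv f) with hg
  have han : AnalyticOnNhd ℂ f (ball (0:ℂ) 1) := hf.analyticOnNhd isOpen_ball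
  have han2 : AnalyticOnNhd ℂ g (ball (0:ℂ) 1) := han.deriv.deriv
  have hgc : ContinuousOn g (ball (0:ℂ) 1) := fun z hz =>
    ((han2 z hz).continuousAt).continuousWithinAt
  set φ : ℝ → ℂ := fun x => f x + (1 - (x:ℂ)) * deriv f x with hφ
  have hballmem : ∀ x : ℝ, 0 ≤ x → x < 1 → ((x:ℂ) ∈ ball (0:ℂ) 1) := by
    intro x h0 h1
    rw [mem_ball_zero_iff, Complex.norm_real, Real.norm_eq_abs, _root_.abs_of_nonneg h0]
    exact h1
  have hderiv : ∀ x ∈ Set.Ico (0:ℝ) 1, HasDerivAt φ ((1 - (x:ℂ)) * g x) x := by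
    intro x hx
    have hxb : ((x:ℂ)) ∈ ball (0:ℂ) 1 := hballmem x hx.1 hx.2
    have h1 : HasDerivAt f (deriv f (x:ℂ)) (x:ℂ) := ((han _ hxb).differentiableAt).hasDerivAt
    have h2 : HasDerivAt (deriv f) (g (x:ℂ)) (x:ℂ) :=
      ((han.deriv _ hxb).differentiableAt).hasDerivAt
    have h4 : HasDerivAt (fun z : ℂ => 1 - z) (-1) (x:ℂ) := by
      simpa using (hasDerivAt_id (x:ℂ)).const_sub 1
    have h3 : HasDerivAt (fun z : ℂ => f z + (1 - z) * deriv f z)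
        (deriv f (x:ℂ) + ((-1) * deriv f (x:ℂ) + (1 - (x:ℂ)) * g (x:ℂ))) (x:ℂ) :=
      h1.add (h4.mul h2)
    have h5 := h3.comp_ofReal
    convert h5 using 1
    ring
  have key : ∀ x₀ ∈ Set.Ioo (0:ℝ) 1, ENNReal.ofReal ‖φ x₀‖
      ≤ ∫⁻ x in Set.Ioo (0:ℝ) 1, ENNReal.ofReal ((1 - x) * ‖g x‖) := by
    intro x₀ hx₀
    have hsub : Set.uIcc (0:ℝ) x₀ ⊆ Set.Ico (0:ℝ) 1 := by
      rw [Set.uIcc_of_le hx₀.1.le]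
      exact fun t ht => ⟨ht.1, lt_of_le_of_lt ht.2 hx₀.2⟩
    have hcontg : ContinuousOn (fun t : ℝ => (1 - (t:ℂ)) * g t) (Set.uIcc 0 x₀) := by
      apply ContinuousOn.mul
      · fun_prop
      · exact hgc.comp Complex.continuous_ofReal.continuousOn
          (fun t ht => hballmem t (hsub ht).1 (hsub ht).2)
    have hftc := intervalIntegral.integral_eq_sub_of_hasDerivAt
      (fun t ht => hderiv t (hsub ht)) hcontg.intervalIntegrable
    have hφ0 : φ 0 = 0 := by simp [hφ, hf0, hf'0]
    have hb1 : ‖φ x₀‖ ≤ ∫ t in (0:ℝ)..x₀, ‖(1 - (t:ℂ)) * g t‖ := by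
      rw [show φ x₀ = ∫ t in (0:ℝ)..x₀, (1 - (t:ℂ)) * g t from by rw [hftc, hφ0, sub_zero]]
      exact intervalIntegral.norm_integral_le_integral_norm hx₀.1.le
    have hb2 : ∫ t in (0:ℝ)..x₀, ‖(1 - (t:ℂ)) * g t‖ = ∫ t in (0:ℝ)..x₀, (1 - t) * ‖g t‖ := by
      refine intervalIntegral.integral_congr fun t ht => ?_
      rw [norm_mul]
      congr 1
      rw [show (1:ℂ) - (t:ℂ) = ((1 - t : ℝ) : ℂ) by push_cast; ring, Complex.norm_real]
      exact _root_.abs_of_nonneg (by linarith [(hsub ht).2])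
    have hcont2 : ContinuousOn (fun t : ℝ => (1 - t) * ‖g t‖) (Set.uIcc 0 x₀) := by
      apply ContinuousOn.mul (by fun_prop)
      exact (hgc.comp Complex.continuous_ofReal.continuousOn
        (fun t ht => hballmem t (hsub ht).1 (hsub ht).2)).norm
    have hint : IntegrableOn (fun t : ℝ => (1 - t) * ‖g t‖) (Set.Ioc 0 x₀) := by
      have h9 : Set.Icc (0:ℝ) x₀ ⊆ Set.uIcc 0 x₀ := by
        rw [Set.uIcc_of_le hx₀.1.le]
      exact ((hcont2.mono h9).integrableOn_compact isCompact_Icc).mono_set Set.Ioc_subset_Icc_self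
    have hieq : ∫ t in (0:ℝ)..x₀, (1 - t) * ‖g t‖ = ∫ t in Set.Ioc 0 x₀, (1 - t) * ‖g t‖ :=
      intervalIntegral.integral_of_le hx₀.1.le
    calc ENNReal.ofReal ‖φ x₀‖
        ≤ ENNReal.ofReal (∫ t in Set.Ioc 0 x₀, (1 - t) * ‖g t‖) :=
          ENNReal.ofReal_le_ofReal (by rw [← hieq, ← hb2]; exact hb1)
      _ = ∫⁻ t in Set.Ioc 0 x₀, ENNReal.ofReal ((1 - t) * ‖g t‖) :=
          ofReal_integral_eq_lintegral_ofReal hint ((ae_restrict_iff' measurableSet_Ioc).2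
            (Eventually.of_forall fun t ht =>
              mul_nonneg (by linarith [ht.2, hx₀.2]) (norm_nonneg _)))
      _ ≤ ∫⁻ t in Set.Ioo (0:ℝ) 1, ENNReal.ofReal ((1 - t) * ‖g t‖) :=
          lintegral_mono_set (fun t ht => ⟨ht.1, lt_of_le_of_lt ht.2 hx₀.2⟩)
  have htends : Tendsto (fun ε : ℝ => ENNReal.ofReal ‖φ (1 - ε)‖) (nhdsWithin 0 (Set.Ioi 0))
      (nhds 1) := by
    have h7 : Tendsto (fun ε : ℝ => φ (1 - ε)) (nhdsWithin 0 (Set.Ioi 0)) (nhds 1) := by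
      have heq : ∀ ε : ℝ, φ (1 - ε) = f (1 - (ε:ℂ)) + (ε:ℂ) * deriv f (1 - (ε:ℂ)) := by
        intro ε
        have : ((1 - ε : ℝ) : ℂ) = 1 - (ε:ℂ) := by push_cast; ring
        simp only [hφ, this]
        ring_nf
      simp only [heq]
      simpa using hlim1.add hlim2
    have h8 : Tendsto (fun ε : ℝ => ‖φ (1 - ε)‖) (nhdsWithin 0 (Set.Ioi 0)) (nhds 1) := by
      simpa using h7.norm
    have := (ENNReal.continuous_ofReal.tendsto 1).comp h8
    rw [ENNReal.ofReal_one] at this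
    exact this
  refine le_of_tendsto htends ?_
  filter_upwards [Ioo_mem_nhdsGT_of_mem (by norm_num : (0:ℝ) ∈ Set.Ico (0:ℝ) 1)] with ε hε
  exact key (1 - ε) ⟨by linarith [hε.2], by linarith [hε.1]⟩

lemma omega_measurable (r : ℝ) : MeasurableSet (Omega r) := by
  have h1 : IsClosed {z : ℂ | ‖z‖ ≤ r} :=
    isClosed_le continuous_norm continuous_const
  have hcb : {z : ℂ | ‖z‖ ≤ r} = closedBall (0:ℂ) r := by
    ext z
    simp [mem_closedBall_zero_iff]
  have h2 : (⋃ z ∈ {z : ℂ | ‖z‖ ≤ r}, segment ℝ z 1)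
      = (fun p : ℂ × ℝ => (1 - p.2) • p.1 + p.2 • (1:ℂ)) ''
        ({z : ℂ | ‖z‖ ≤ r} ×ˢ Set.Icc (0:ℝ) 1) := by
    ext w
    simp only [Set.mem_iUnion, Set.mem_image, Set.mem_prod, Set.mem_setOf_eq, exists_prop]
    constructor
    · rintro ⟨z, hz, hw⟩
      rw [segment_eq_image] at hw
      obtain ⟨t, ht, hw⟩ := hw
      exact ⟨(z, t), ⟨hz, ht⟩, hw⟩
    · rintro ⟨⟨z, t⟩, ⟨hz, ht⟩, hw⟩
      refine ⟨z, hz, ?_⟩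
      rw [segment_eq_image]
      exact ⟨t, ht, hw⟩
  have h3 : IsCompact ((fun p : ℂ × ℝ => (1 - p.2) • p.1 + p.2 • (1:ℂ)) ''
      ({z : ℂ | ‖z‖ ≤ r} ×ˢ Set.Icc (0:ℝ) 1)) := by
    apply IsCompact.image
    · rw [hcb]
      exact (isCompact_closedBall _ _).prod isCompact_Icc
    · fun_prop
  rw [Omega, h2]
  exact h1.measurableSet.union h3.isClosed.measurableSet

lemma mem_Omega {r x : ℝ} (hr : 0 < r) (hr2 : r ≤ 1/2) (hx : x ∈ Set.Ioo (0:ℝ) 1) {w : ℂ}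
    (hw : dist w (x:ℂ) < (1 - x) * r) : w ∈ Omega r ∩ ball (0:ℂ) 1 := by
  rw [Complex.dist_eq] at hw
  have h1x : (0:ℝ) < 1 - x := by linarith [hx.2]
  have habs1x : ‖(1:ℂ) - (x:ℂ)‖ = 1 - x := by
    rw [show (1:ℂ) - (x:ℂ) = ((1 - x : ℝ) : ℂ) by push_cast; ring, Complex.norm_real, Real.norm_eq_abs,
      _root_.abs_of_pos h1x]
  constructor
  · right
    rw [Set.mem_iUnion₂]
    refine ⟨(w - x) / (1 - x), ?_, ?_⟩
    · show ‖_‖ ≤ r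
      rw [norm_div, habs1x, div_le_iff₀ h1x]
      linarith [hw]
    · refine ⟨1 - x, x, h1x.le, hx.1.le, by ring, ?_⟩
      show (1 - x) • ((w - (x:ℂ)) / ((1:ℂ) - (x:ℂ))) + x • (1:ℂ) = w
      rw [real_smul, real_smul]
      push_cast
      have hne : (1:ℂ) - (x:ℂ) ≠ 0 := by
        intro h
        apply h1x.ne'
        have := congrArg (‖·‖) h
        rwa [habs1x, norm_zero] at this
      field_simp
      ring
  · rw [mem_ball_zero_iff]
    calc ‖w‖ = ‖(w - (x:ℂ)) + (x:ℂ)‖ := by ring_nf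
      _ ≤ ‖w - (x:ℂ)‖ + ‖(x:ℂ)‖ := norm_add_le _ _
      _ < (1 - x) * r + x := by
          apply add_lt_add_of_lt_of_le
          · exact hw
          · rw [Complex.norm_real, Real.norm_eq_abs, _root_.abs_of_nonneg hx.1.le]
      _ ≤ (1 - x) * (1/2) + x := by nlinarith [h1x]
      _ < 1 := by linarith [hx.2]

end Aux

section Main
open Set Real
open scoped ENNReal

theorem stmt4 : ∃ c : ℝ, 0 < c ∧
    ∀ f : ℂ → ℂ, DifferentiableOn ℂ f (ball (0:ℂ) 1) →
      f 0 = 0 → deriv f 0 = 0 →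
      Tendsto (fun ε : ℝ => f (1 - (ε:ℂ))) (nhdsWithin 0 (Set.Ioi 0)) (nhds 1) →
      Tendsto (fun ε : ℝ => (ε:ℂ) * deriv f (1 - (ε:ℂ))) (nhdsWithin 0 (Set.Ioi 0)) (nhds 0) →
      ∀ r : ℝ, 0 < r → r ≤ 1/2 →
        ENNReal.ofReal (c * r) ≤
          ∫⁻ z in Omega r, ENNReal.ofReal (‖deriv (deriv f) z‖) ∂dA := by
  refine ⟨1/6, by norm_num, ?_⟩
  intro f hf hf0 hf'0 hlim1 hlim2 r hr hr2
  have han : AnalyticOnNhd ℂ f (ball (0:ℂ) 1) := hf.analyticOnNhd isOpen_ball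
  have han2 : AnalyticOnNhd ℂ (deriv (deriv f)) (ball (0:ℂ) 1) := han.deriv.deriv
  set g : ℂ → ℂ := deriv (deriv f) with hg
  have hgc : ContinuousOn g (ball (0:ℂ) 1) := fun z hz =>
    ((han2 z hz).continuousAt).continuousWithinAt
  set G : ℂ → ℝ≥0∞ := fun w => ENNReal.ofReal ‖g w‖ with hG
  have hGmeas : Measurable G := (measurable_deriv _).norm.ennreal_ofReal
  set T : Set ℂ := Omega r ∩ ball (0:ℂ) 1 with hT
  have hTmeas : MeasurableSet T := (omega_measurable r).inter measurableSet_ball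
  set E : Set (ℝ × ℂ) := {p : ℝ × ℂ | dist p.2 ((p.1 : ℝ) : ℂ) < (1 - p.1) * r} with hE
  have hEopen : IsOpen E := by
    apply isOpen_lt <;> fun_prop
  set F : ℝ → ℂ → ℝ≥0∞ := fun x w =>
    (ENNReal.ofReal (π * (1 - x) * r^2))⁻¹ * E.indicator (fun p => G p.2) (x, w) with hF
  have hFmeas : Measurable (Function.uncurry F) := by
    apply Measurable.mul
    · apply Measurable.inv
      apply Measurable.ennreal_ofReal
      fun_prop
    · exact (hGmeas.comp measurable_snd).indicator hEopen.measurableSet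
  have hM1 : 1 ≤ ∫⁻ x in Set.Ioo (0:ℝ) 1, ENNReal.ofReal ((1 - x) * ‖g x‖) :=
    step1 hf hf0 hf'0 hlim1 hlim2
  have hM2 : ∫⁻ x in Set.Ioo (0:ℝ) 1, ENNReal.ofReal ((1 - x) * ‖g x‖)
      ≤ ∫⁻ x in Set.Ioo (0:ℝ) 1, ∫⁻ w, F x w := by
    refine lintegral_mono_ae ((ae_restrict_iff' measurableSet_Ioo).2 (Eventually.of_forall ?_))
    intro x hx
    have h1x : 0 < 1 - x := by linarith [hx.2]
    have hsx : 0 < (1 - x) * r := by positivity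
    have hsub2 : closedBall ((x:ℂ)) ((1 - x) * r) ⊆ ball (0:ℂ) 1 := by
      intro w hw
      rw [mem_closedBall] at hw
      rw [mem_ball]
      calc dist w 0 ≤ dist w (x:ℂ) + dist ((x:ℂ)) 0 := dist_triangle _ _ _
        _ ≤ (1 - x) * r + x := by
            apply add_le_add hw
            rw [Complex.dist_eq, sub_zero, Complex.norm_real, Real.norm_eq_abs, _root_.abs_of_nonneg hx.1.le]
        _ < 1 := by nlinarith [hx.1, hx.2, hr2]
    have hmv : ENNReal.ofReal (π * ((1 - x) * r)^2 * ‖g ((x:ℂ))‖)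
        ≤ ∫⁻ w in ball ((x:ℂ)) ((1 - x) * r), G w := by
      have hreal := area_mv hsx (hgc.mono hsub2)
        (fun z hz => (han2 z (hsub2 (ball_subset_closedBall hz))).differentiableAt)
      have hint : IntegrableOn (fun w => ‖g w‖) (ball ((x:ℂ)) ((1 - x) * r)) :=
        (((hgc.mono hsub2).norm).integrableOn_compact (isCompact_closedBall _ _)).mono_set
          ball_subset_closedBall
      calc ENNReal.ofReal (π * ((1 - x) * r)^2 * ‖g ((x:ℂ))‖)
          ≤ ENNReal.ofReal (∫ w in ball ((x:ℂ)) ((1 - x) * r), ‖g w‖) :=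
            ENNReal.ofReal_le_ofReal hreal
        _ = ∫⁻ w in ball ((x:ℂ)) ((1 - x) * r), G w :=
            ofReal_integral_eq_lintegral_ofReal hint
              (Filter.Eventually.of_forall fun w => norm_nonneg _)
    have hindeq : ∀ w : ℂ, E.indicator (fun p : ℝ × ℂ => G p.2) (x, w)
        = (ball ((x:ℂ)) ((1 - x) * r)).indicator G w := by
      intro w
      by_cases hw : w ∈ ball ((x:ℂ)) ((1 - x) * r)
      · rw [Set.indicator_of_mem hw,
          Set.indicator_of_mem (show (x, w) ∈ E from by rwa [mem_ball] at hw)]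
      · rw [Set.indicator_of_notMem hw,
          Set.indicator_of_notMem (show (x, w) ∉ E from fun hc => hw (by rwa [mem_ball]))]
    have hFint : ∫⁻ w, F x w
        = (ENNReal.ofReal (π * (1 - x) * r^2))⁻¹ * ∫⁻ w in ball ((x:ℂ)) ((1 - x) * r), G w := by
      have heq : ∀ w : ℂ, F x w = (ENNReal.ofReal (π * (1 - x) * r^2))⁻¹
          * (ball ((x:ℂ)) ((1 - x) * r)).indicator G w := by
        intro w
        simp only [hF]
        rw [hindeq w]
      simp only [heq]
      rw [lintegral_const_mul _ (hGmeas.indicator measurableSet_ball),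
        lintegral_indicator measurableSet_ball]
    rw [hFint]
    calc ENNReal.ofReal ((1 - x) * ‖g ((x:ℂ))‖)
        = (ENNReal.ofReal (π * (1 - x) * r^2))⁻¹
            * ENNReal.ofReal (π * ((1 - x) * r)^2 * ‖g ((x:ℂ))‖) := by
          rw [← ENNReal.ofReal_inv_of_pos (by positivity), ← ENNReal.ofReal_mul (by positivity)]
          congr 1
          field_simp
      _ ≤ _ := mul_le_mul_right hmv _
  have hswap : ∫⁻ x in Set.Ioo (0:ℝ) 1, ∫⁻ w, F x w = ∫⁻ w, ∫⁻ x in Set.Ioo (0:ℝ) 1, F x w :=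
    lintegral_lintegral_swap hFmeas.aemeasurable
  have hker : ∀ w : ℂ, (∫⁻ x in Set.Ioo (0:ℝ) 1, F x w)
      ≤ T.indicator (fun _ => ENNReal.ofReal (6 / (π * r))) w * G w := by
    intro w
    by_cases hcase : ∃ x ∈ Set.Ioo (0:ℝ) 1, dist w ((x:ℂ)) < (1 - x) * r
    · obtain ⟨x₁, hx₁, hdist₁⟩ := hcase
      have hwT : w ∈ T := mem_Omega hr hr2 hx₁ hdist₁
      set u : ℝ := w.re with hu
      have hre : ∀ x : ℝ, |u - x| ≤ dist w ((x:ℂ)) := by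
        intro x
        rw [Complex.dist_eq]
        have h' : u - x = (w - (x:ℂ)).re := by simp [hu]
        rw [h']
        exact Complex.abs_re_le_norm _
      have h1u : 0 < 1 - u := by
        have h := (hre x₁).trans_lt hdist₁
        have h2 := le_abs_self (u - x₁)
        nlinarith [hx₁.1, hx₁.2]
      set A : Set ℝ := Set.Ioo (u - 2*(1-u)*r) (u + 2*(1-u)*r) with hA
      set C : ℝ≥0∞ := ENNReal.ofReal (3 / (2*π*(1-u)*r^2)) with hC
      have hpt : ∀ x : ℝ, x ∈ Set.Ioo (0:ℝ) 1 →
          F x w ≤ A.indicator (fun _ => C) x * G w := by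
        intro x hx
        by_cases hxE : (x, w) ∈ E
        · have hdist : dist w ((x:ℂ)) < (1 - x) * r := hxE
          have h1x : 0 < 1 - x := by linarith [hx.2]
          have habs : |u - x| < (1 - x) * r := (hre x).trans_lt hdist
          have habs' : |u - x| ≤ (1 - x) / 2 := by nlinarith [abs_nonneg (u - x)]
          have hux : u - x ≤ |u - x| := le_abs_self _
          have hxu : x - u ≤ |u - x| := by
            rw [abs_sub_comm]
            exact le_abs_self _
          have hxa : 1 - x ≤ 2*(1 - u) := by nlinarith
          have hxb : (2/3) * (1 - u) ≤ 1 - x := by nlinarith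
          have hxmem : x ∈ A := by
            constructor
            · nlinarith
            · nlinarith
          rw [Set.indicator_of_mem hxmem]
          simp only [hF]
          rw [Set.indicator_of_mem hxE]
          apply mul_le_mul_left
          rw [← ENNReal.ofReal_inv_of_pos (by positivity), hC]
          apply ENNReal.ofReal_le_ofReal
          rw [inv_eq_one_div, div_le_div_iff₀ (by positivity) (by positivity)]
          nlinarith [mul_le_mul_of_nonneg_right hxb (by positivity : (0:ℝ) ≤ π * r^2)]
        · simp only [hF]
          rw [Set.indicator_of_notMem hxE, mul_zero]
          exact bot_le
      calc ∫⁻ x in Set.Ioo (0:ℝ) 1, F x w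
          ≤ ∫⁻ x in Set.Ioo (0:ℝ) 1, A.indicator (fun _ => C) x * G w :=
            lintegral_mono_ae ((ae_restrict_iff' measurableSet_Ioo).2
              (Filter.Eventually.of_forall hpt))
        _ = (∫⁻ x in Set.Ioo (0:ℝ) 1, A.indicator (fun _ => C) x) * G w :=
            lintegral_mul_const _ (measurable_const.indicator measurableSet_Ioo)
        _ ≤ (C * volume A) * G w := by
            apply mul_le_mul_left
            calc ∫⁻ x in Set.Ioo (0:ℝ) 1, A.indicator (fun _ => C) x
                ≤ ∫⁻ x, A.indicator (fun _ => C) x := setLIntegral_le_lintegral _ _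
              _ = C * volume A := lintegral_indicator_const measurableSet_Ioo C
        _ = ENNReal.ofReal (6 / (π * r)) * G w := by
            rw [hA, Real.volume_Ioo, hC, ← ENNReal.ofReal_mul (by positivity)]
            congr 2
            rw [show u + 2*(1-u)*r - (u - 2*(1-u)*r) = 4*(1-u)*r by ring]
            field_simp
            ring
        _ = T.indicator (fun _ => ENNReal.ofReal (6 / (π * r))) w * G w := by
            rw [Set.indicator_of_mem hwT]
    · push_neg at hcase
      have hz : ∀ x ∈ Set.Ioo (0:ℝ) 1, F x w = 0 := by
        intro x hx
        simp only [hF]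
        rw [Set.indicator_of_notMem (show (x, w) ∉ E from fun hmem =>
          absurd hmem (not_lt.2 (hcase x hx))), mul_zero]
      have h0 : ∫⁻ x in Set.Ioo (0:ℝ) 1, F x w = 0 := by
        rw [setLIntegral_congr_fun measurableSet_Ioo hz]
        simp
      rw [h0]
      exact bot_le
  have hfinal : (1 : ℝ≥0∞) ≤ ENNReal.ofReal (6 / (π * r)) * ∫⁻ w in T, G w := by
    calc (1 : ℝ≥0∞) ≤ ∫⁻ x in Set.Ioo (0:ℝ) 1, ENNReal.ofReal ((1 - x) * ‖g x‖) := hM1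
      _ ≤ ∫⁻ x in Set.Ioo (0:ℝ) 1, ∫⁻ w, F x w := hM2
      _ = ∫⁻ w, ∫⁻ x in Set.Ioo (0:ℝ) 1, F x w := hswap
      _ ≤ ∫⁻ w, T.indicator (fun _ => ENNReal.ofReal (6 / (π * r))) w * G w :=
          lintegral_mono hker
      _ = ∫⁻ w, T.indicator (fun w => ENNReal.ofReal (6 / (π * r)) * G w) w := by
          congr 1
          funext w
          by_cases hw : w ∈ T
          · rw [Set.indicator_of_mem hw, Set.indicator_of_mem hw]
          · rw [Set.indicator_of_notMem hw, Set.indicator_of_notMem hw, zero_mul]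
      _ = ∫⁻ w in T, ENNReal.ofReal (6 / (π * r)) * G w := lintegral_indicator hTmeas _
      _ = ENNReal.ofReal (6 / (π * r)) * ∫⁻ w in T, G w := lintegral_const_mul _ hGmeas
  have ha0 : ENNReal.ofReal (6 / (π * r)) ≠ 0 := by
    have : (0:ℝ) < 6 / (π * r) := by positivity
    simp [ENNReal.ofReal_eq_zero, not_le, this]
  have hatop : ENNReal.ofReal (6 / (π * r)) ≠ ⊤ := ENNReal.ofReal_ne_top
  have hTbound : ENNReal.ofReal (π * r / 6) ≤ ∫⁻ w in T, G w := by
    have h10 : (ENNReal.ofReal (6 / (π * r)))⁻¹ ≤ ∫⁻ w in T, G w := by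
      calc (ENNReal.ofReal (6 / (π * r)))⁻¹
          = (ENNReal.ofReal (6 / (π * r)))⁻¹ * 1 := (mul_one _).symm
        _ ≤ (ENNReal.ofReal (6 / (π * r)))⁻¹
            * (ENNReal.ofReal (6 / (π * r)) * ∫⁻ w in T, G w) := mul_le_mul_right hfinal _
        _ = ∫⁻ w in T, G w := by
            rw [← mul_assoc, ENNReal.inv_mul_cancel ha0 hatop, one_mul]
    calc ENNReal.ofReal (π * r / 6) = (ENNReal.ofReal (6 / (π * r)))⁻¹ := by
          rw [← ENNReal.ofReal_inv_of_pos (by positivity), inv_div]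
      _ ≤ _ := h10
  have hint_eq : ∫⁻ z in Omega r, ENNReal.ofReal (‖g z‖) ∂dA
      = (ENNReal.ofReal π)⁻¹ * ∫⁻ w in T, G w := by
    rw [show dA = (ENNReal.ofReal Real.pi)⁻¹ • volume.restrict (ball (0:ℂ) 1) from rfl]
    rw [Measure.restrict_smul, lintegral_smul_measure,
      Measure.restrict_restrict (omega_measurable r)]
    rfl
  rw [hint_eq]
  calc ENNReal.ofReal (1/6 * r)
      = (ENNReal.ofReal π)⁻¹ * ENNReal.ofReal (π * r / 6) := by
        rw [show π * r / 6 = π * (1/6 * r) by ring, ENNReal.ofReal_mul pi_pos.le, ← mul_assoc,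
          ENNReal.inv_mul_cancel (by simp [ENNReal.ofReal_eq_zero, not_le, pi_pos])
            ENNReal.ofReal_ne_top, one_mul]
    _ ≤ _ := mul_le_mul_right hTbound _

end Main
end

section
/- Let (f_n) be a sequence of analytic functions on 𝔻 with ∫_𝔻 |f_n''(z)| dA(z) = 1 for every n, and suppose f_n → 0 uniformly on every compact subset of 𝔻. Then there exist a measurable function h : 𝔻 → ℂ with |h(z)| ≤ 1 for all z, and a subsequence (f_{k_n}), such that |∫_𝔻 f_{k_n}''(z)·h(z) dA(z)| ≥ 7/10 for every n. -/
open MeasureTheory Metric Complex Filter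
open scoped ENNReal NNReal

private lemma aux_annulus (g : ℂ → ℂ) (r R : ℝ) (hrR : r ≤ R)
    (h1 : (∫⁻ z in closedBall (0:ℂ) r, (‖g z‖₊ : ℝ≥0∞) ∂dA) ≤ ENNReal.ofReal (1/20))
    (h2 : ENNReal.ofReal (19/20) ≤ ∫⁻ z in closedBall (0:ℂ) R, (‖g z‖₊ : ℝ≥0∞) ∂dA) :
    ENNReal.ofReal (9/10) ≤
      ∫⁻ z in closedBall (0:ℂ) R \ closedBall (0:ℂ) r, (‖g z‖₊ : ℝ≥0∞) ∂dA := by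
  have hU : closedBall (0:ℂ) R = closedBall (0:ℂ) r ∪
      (closedBall (0:ℂ) R \ closedBall (0:ℂ) r) := by
    rw [Set.union_diff_cancel (closedBall_subset_closedBall hrR)]
  have hdisj : Disjoint (closedBall (0:ℂ) r)
      (closedBall (0:ℂ) R \ closedBall (0:ℂ) r) := Set.disjoint_sdiff_right
  rw [hU, lintegral_union (measurableSet_closedBall.diff measurableSet_closedBall) hdisj]
    at h2
  have h3 : ENNReal.ofReal (19/20) - ENNReal.ofReal (1/20) ≤
      ∫⁻ z in closedBall (0:ℂ) R \ closedBall (0:ℂ) r, (‖g z‖₊ : ℝ≥0∞) ∂dA := by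
    rw [tsub_le_iff_right]
    calc ENNReal.ofReal (19/20)
        ≤ (∫⁻ z in closedBall (0:ℂ) r, (‖g z‖₊ : ℝ≥0∞) ∂dA) +
          ∫⁻ z in closedBall (0:ℂ) R \ closedBall (0:ℂ) r, (‖g z‖₊ : ℝ≥0∞) ∂dA := h2
      _ ≤ _ := by rw [add_comm]; exact add_le_add le_rfl h1
  rw [← ENNReal.ofReal_sub _ (by norm_num)] at h3
  norm_num at h3 ⊢
  exact h3



private lemma aux_big (G : ℂ → ℂ)
    (hdA_compl : dA (ball (0:ℂ) 1)ᶜ = 0)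
    (htot : (∫⁻ z, (‖G z‖₊ : ℝ≥0∞) ∂dA) = 1)
    (r : ℝ) (hr1 : r < 1) :
    ∃ r', r < r' ∧ r' < 1 ∧
      ENNReal.ofReal (19/20) ≤ ∫⁻ z in closedBall (0:ℂ) r', (‖G z‖₊ : ℝ≥0∞) ∂dA := by
  set μ := dA.withDensity (fun z => (‖G z‖₊ : ℝ≥0∞)) with hμ
  have hμs : ∀ s : Set ℂ, MeasurableSet s → μ s = ∫⁻ z in s, (‖G z‖₊ : ℝ≥0∞) ∂dA :=
    fun s hs => withDensity_apply _ hs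
  set ρ : ℕ → ℝ := fun m => 1 - (1 - r) / (m + 2) with hρ
  have h1r : (0:ℝ) < 1 - r := by linarith
  have hρlt1 : ∀ m, ρ m < 1 := by
    intro m
    have : (0:ℝ) < (1 - r) / (m + 2) := by positivity
    simp only [hρ]; linarith
  have hρgt : ∀ m, r < ρ m := by
    intro m
    have h2 : (1 - r) / (m + 2) < 1 - r := by
      rw [div_lt_iff₀ (by positivity)]
      nlinarith [Nat.cast_nonneg (α := ℝ) m]
    simp only [hρ]; linarith
  have hρmono : Monotone ρ := by
    intro a b hab
    simp only [hρ]
    have : (1 - r) / (b + 2) ≤ (1 - r) / (a + 2) := by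
      apply div_le_div_of_nonneg_left h1r.le (by positivity)
      exact_mod_cast by omega
    linarith
  have hmono : Monotone fun m => closedBall (0:ℂ) (ρ m) :=
    fun a b hab => closedBall_subset_closedBall (hρmono hab)
  have hunion : (⋃ m, closedBall (0:ℂ) (ρ m)) = ball (0:ℂ) 1 := by
    ext z
    simp only [Set.mem_iUnion, mem_closedBall, mem_ball, dist_zero_right]
    constructor
    · rintro ⟨m, hm⟩
      exact lt_of_le_of_lt hm (hρlt1 m)
    · intro hz
      obtain ⟨m, hm⟩ := exists_nat_gt ((1 - r) / (1 - ‖z‖))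
      refine ⟨m, ?_⟩
      have hz1 : (0:ℝ) < 1 - ‖z‖ := by linarith
      have : (1 - r) / (m + 2) ≤ 1 - ‖z‖ := by
        rw [div_le_iff₀ (by positivity)]
        have := (div_le_iff₀ hz1).mp (le_of_lt hm)
        nlinarith
      simp only [hρ]; linarith
  have hlim := tendsto_measure_iUnion_atTop (μ := μ) hmono
  rw [hunion] at hlim
  have hμball : μ (ball (0:ℂ) 1) = 1 := by
    rw [hμs _ measurableSet_ball]
    have hsplit := lintegral_add_compl (fun z => (‖G z‖₊ : ℝ≥0∞))
      (measurableSet_ball (x := (0:ℂ)) (ε := 1)) (μ := dA)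
    have hc0 : (∫⁻ z in (ball (0:ℂ) 1)ᶜ, (‖G z‖₊ : ℝ≥0∞) ∂dA) = 0 :=
      setLIntegral_measure_zero _ _ hdA_compl
    rw [hc0, add_zero, htot] at hsplit
    exact hsplit
  rw [hμball] at hlim
  have hev : ∀ᶠ m in atTop, ENNReal.ofReal (19/20) < μ (closedBall (0:ℂ) (ρ m)) := by
    apply hlim.eventually
    apply eventually_gt_nhds
    rw [← ENNReal.ofReal_one]
    exact ENNReal.ofReal_lt_ofReal_iff_of_nonneg (by norm_num) |>.mpr (by norm_num)
  obtain ⟨m, hm⟩ := hev.exists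
  exact ⟨ρ m, hρgt m, hρlt1 m, by rw [← hμs _ measurableSet_closedBall]; exact hm.le⟩


private lemma aux_main (K : ℂ → ℂ) (hm : Measurable K) (hint : Integrable K dA)
    (htot : (∫⁻ z, (‖K z‖₊ : ℝ≥0∞) ∂dA) = 1)
    (s : Set ℂ) (hs : MeasurableSet s)
    (hmass : ENNReal.ofReal (9/10) ≤ ∫⁻ z in s, (‖K z‖₊ : ℝ≥0∞) ∂dA)
    (h : ℂ → ℂ) (hhm : Measurable h) (hhb : ∀ z, ‖h z‖ ≤ 1)
    (hagree : ∀ z ∈ s, K z * h z = ((‖K z‖ : ℝ) : ℂ)) :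
    (7:ℝ)/10 ≤ ‖∫ z, K z * h z ∂dA‖ := by
  have hKh : Integrable (fun z => K z * h z) dA := by
    apply Integrable.mono' hint.norm ((hm.mul hhm).aestronglyMeasurable)
    refine Eventually.of_forall fun z => ?_
    rw [Pi.mul_apply, norm_mul]
    calc ‖K z‖ * ‖h z‖ ≤ ‖K z‖ * 1 := by
          apply mul_le_mul_of_nonneg_left _ (norm_nonneg _)
          exact hhb z
      _ = ‖K z‖ := mul_one _
  set I1 := ∫ z in s, K z * h z ∂dA with hI1def
  set I2 := ∫ z in sᶜ, K z * h z ∂dA with hI2def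
  have hsplit : ∫ z, K z * h z ∂dA = I1 + I2 := (integral_add_compl hs hKh).symm
  have hlt_top : (∫⁻ z in s, (‖K z‖₊ : ℝ≥0∞) ∂dA) ≠ ⊤ :=
    (lt_of_le_of_lt (setLIntegral_le_lintegral _ _)
      (by rw [htot]; exact ENNReal.one_lt_top)).ne
  set M := ∫ z in s, ‖K z‖ ∂dA with hM
  have hMeq : M = (∫⁻ z in s, (‖K z‖₊ : ℝ≥0∞) ∂dA).toReal := by
    rw [hM, integral_norm_eq_lintegral_enorm hm.aestronglyMeasurable.restrict]; rfl
  have hM9 : 9/10 ≤ M := by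
    rw [hMeq]
    have := ENNReal.toReal_mono hlt_top hmass
    rwa [ENNReal.toReal_ofReal (by norm_num)] at this
  have htotR : ∫ z, ‖K z‖ ∂dA = 1 := by
    rw [integral_norm_eq_lintegral_enorm hm.aestronglyMeasurable]; simp only [enorm_eq_nnnorm]; rw [htot]; simp
  have hcomp : ∫ z in sᶜ, ‖K z‖ ∂dA = 1 - M := by
    have h4 := integral_add_compl hs hint.norm
    rw [htotR] at h4
    rw [← hM] at h4
    linarith
  have hMnonneg : 0 ≤ M := by positivity
  have hI1 : I1 = ((M : ℝ) : ℂ) := by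
    rw [hI1def, setIntegral_congr_fun hs hagree]
    rw [show (fun z => ((‖K z‖ : ℝ) : ℂ)) = (fun z => RCLike.ofReal (K := ℂ) ‖K z‖) from rfl]
    rw [integral_ofReal]
    norm_num [hM]
  have hI1abs : ‖I1‖ = M := by
    rw [hI1, Complex.norm_real, Real.norm_eq_abs, _root_.abs_of_nonneg hMnonneg]
  have hI2 : ‖I2‖ ≤ 1 - M := by
    calc ‖I2‖ ≤ ∫ z in sᶜ, ‖K z * h z‖ ∂dA := norm_integral_le_integral_norm _
      _ ≤ ∫ z in sᶜ, ‖K z‖ ∂dA := by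
          apply integral_mono_of_nonneg (Eventually.of_forall fun z => norm_nonneg _)
            hint.norm.restrict
          refine Eventually.of_forall fun z => ?_
          show ‖K z * h z‖ ≤ ‖K z‖
          rw [norm_mul]
          calc ‖K z‖ * ‖h z‖ ≤ ‖K z‖ * 1 := by
                apply mul_le_mul_of_nonneg_left _ (norm_nonneg _)
                exact hhb z
            _ = ‖K z‖ := mul_one _
      _ = 1 - M := hcomp
  have h3 : ‖I1‖ - ‖I2‖ ≤ ‖I1 + I2‖ := by
    have h5 := norm_add_le (I1 + I2) (-I2)
    simp only [add_neg_cancel_right, norm_neg] at h5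
    linarith
  have habs : ‖∫ z, K z * h z ∂dA‖ = ‖I1 + I2‖ := by
    rw [hsplit]
  rw [habs]
  rw [hI1abs] at h3
  linarith

theorem stmt10 (f : ℕ → ℂ → ℂ)
    (hf : ∀ n, DifferentiableOn ℂ (f n) (ball (0:ℂ) 1))
    (hnorm : ∀ n, (∫⁻ z, ENNReal.ofReal ‖deriv (deriv (f n)) z‖ ∂dA) = 1)
    (hunif : ∀ K : Set ℂ, K ⊆ ball (0:ℂ) 1 → IsCompact K →
      TendstoUniformlyOn f 0 atTop K) :
    ∃ (h : ℂ → ℂ) (k : ℕ → ℕ), Measurable h ∧ (∀ z, ‖h z‖ ≤ 1) ∧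
      StrictMono k ∧
      ∀ n, (7:ℝ)/10 ≤ ‖∫ z, deriv (deriv (f (k n))) z * h z ∂dA‖ := by
  have hπ : (0:ℝ) < Real.pi := Real.pi_pos
  -- dA is a probability measure
  have hdA_univ : dA Set.univ = 1 := by
    simp only [dA, Measure.smul_apply, Measure.restrict_apply MeasurableSet.univ,
      Set.univ_inter, Complex.volume_ball, smul_eq_mul]
    rw [ENNReal.ofReal_one, one_pow, one_mul, ← ENNReal.ofReal_coe_nnreal,
      NNReal.coe_real_pi, ENNReal.inv_mul_cancel]
    · simp [ENNReal.ofReal_eq_zero]; linarith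
    · exact ENNReal.ofReal_ne_top
  have hprob : IsProbabilityMeasure dA := ⟨hdA_univ⟩
  have hdA_compl : dA (ball (0:ℂ) 1)ᶜ = 0 := by
    simp [dA, Measure.restrict_apply (measurableSet_ball.compl)]
  -- measurability and integrability of second derivatives
  have hGm : ∀ m, Measurable (deriv (deriv (f m))) := fun m => measurable_deriv _
  have hnn : ∀ m, (∫⁻ z, (‖deriv (deriv (f m)) z‖₊ : ℝ≥0∞) ∂dA) = 1 := by
    intro m; rw [← hnorm m]; congr 1; funext z
    exact (ofReal_norm _).symm
  have hint : ∀ m, Integrable (deriv (deriv (f m))) dA := by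
    intro m
    refine ⟨(hGm m).aestronglyMeasurable, ?_⟩
    simp only [HasFiniteIntegral, enorm_eq_nnnorm, hnn m]
    exact ENNReal.one_lt_top
  -- locally uniform convergence of second derivatives to 0
  have hTLU : TendstoLocallyUniformlyOn (fun m => deriv (deriv (f m))) 0 atTop
      (ball (0:ℂ) 1) := by
    have h0 : TendstoLocallyUniformlyOn f 0 atTop (ball (0:ℂ) 1) :=
      (tendstoLocallyUniformlyOn_iff_forall_isCompact isOpen_ball).mpr
        (fun K hK hc => hunif K hK hc)
    have hd0 : deriv (0 : ℂ → ℂ) = 0 := by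
      funext z; exact deriv_const z 0
    have h1 := h0.deriv (Eventually.of_forall hf) isOpen_ball
    rw [hd0] at h1
    have hdiff1 : ∀ m, DifferentiableOn ℂ (deriv (f m)) (ball (0:ℂ) 1) := fun m =>
      (((hf m).analyticOnNhd isOpen_ball).deriv).differentiableOn
    have h2 := h1.deriv (Eventually.of_forall hdiff1) isOpen_ball
    rw [hd0] at h2
    exact h2

  -- smallness step
  have hsmall : ∀ r : ℝ, r < 1 → ∀ N : ℕ, ∃ k, N < k ∧
      (∫⁻ z in closedBall (0:ℂ) r, (‖deriv (deriv (f k)) z‖₊ : ℝ≥0∞) ∂dA) ≤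
        ENNReal.ofReal (1/20) := by
    intro r hr N
    have hKs : closedBall (0:ℂ) r ⊆ ball 0 1 := by
      intro z hz
      exact mem_ball.mpr (lt_of_le_of_lt (mem_closedBall.mp hz) hr)
    have hu : TendstoUniformlyOn (fun m => deriv (deriv (f m))) 0 atTop (closedBall 0 r) :=
      (tendstoLocallyUniformlyOn_iff_forall_isCompact isOpen_ball).mp hTLU _ hKs
        (isCompact_closedBall 0 r)
    have hev := (Metric.tendstoUniformlyOn_iff.mp hu) (1/20) (by norm_num)
    obtain ⟨k, hbound, hN⟩ := (hev.and (eventually_gt_atTop N)).exists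
    refine ⟨k, hN, ?_⟩
    have hb : ∀ z ∈ closedBall (0:ℂ) r, (‖deriv (deriv (f k)) z‖₊ : ℝ≥0∞) ≤ ENNReal.ofReal (1/20) := by
      intro z hz
      have h1 := (hbound z hz).le
      rw [show ((‖deriv (deriv (f k)) z‖₊ : ℝ≥0∞)) = ENNReal.ofReal ‖deriv (deriv (f k)) z‖ from (ofReal_norm _).symm]
      apply ENNReal.ofReal_le_ofReal
      simpa [dist_eq_norm] using h1
    calc (∫⁻ z in closedBall (0:ℂ) r, (‖deriv (deriv (f k)) z‖₊ : ℝ≥0∞) ∂dA)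
        ≤ ∫⁻ _ in closedBall (0:ℂ) r, ENNReal.ofReal (1/20) ∂dA :=
          setLIntegral_mono measurable_const hb
      _ = ENNReal.ofReal (1/20) * dA (closedBall (0:ℂ) r) := setLIntegral_const _ _
      _ ≤ ENNReal.ofReal (1/20) * 1 := by
          gcongr
          exact prob_le_one
      _ = ENNReal.ofReal (1/20) := mul_one _

  -- bigness step
  have hbig : ∀ (j : ℕ) (r : ℝ), 0 ≤ r → r < 1 → ∃ r', r < r' ∧ r' < 1 ∧
      ENNReal.ofReal (19/20) ≤
        ∫⁻ z in closedBall (0:ℂ) r', (‖deriv (deriv (f j)) z‖₊ : ℝ≥0∞) ∂dA := by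
    intro j r _ hr1
    exact aux_big _ hdA_compl (hnn j) r hr1
  -- combined step
  have step : ∀ q : ℝ × ℕ, 0 ≤ q.1 → q.1 < 1 → ∃ p : ℝ × ℕ, q.1 < p.1 ∧ p.1 < 1 ∧
      q.2 < p.2 ∧
      (∫⁻ z in closedBall (0:ℂ) q.1, (‖deriv (deriv (f p.2)) z‖₊ : ℝ≥0∞) ∂dA) ≤
        ENNReal.ofReal (1/20) ∧
      ENNReal.ofReal (19/20) ≤
        ∫⁻ z in closedBall (0:ℂ) p.1, (‖deriv (deriv (f p.2)) z‖₊ : ℝ≥0∞) ∂dA := by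
    rintro ⟨r, N⟩ hr0 hr1
    obtain ⟨k, hkN, hk⟩ := hsmall r hr1 N
    obtain ⟨r', hrr', hr'1, hb⟩ := hbig k r hr0 hr1
    exact ⟨(r', k), hrr', hr'1, hkN, hk, hb⟩
  -- build the sequence by recursion
  let Q := {q : ℝ × ℕ // 0 ≤ q.1 ∧ q.1 < 1}
  let step' : Q → Q := fun q =>
    ⟨Classical.choose (step q.1 q.2.1 q.2.2),
      (q.2.1.trans (Classical.choose_spec (step q.1 q.2.1 q.2.2)).1.le),
      (Classical.choose_spec (step q.1 q.2.1 q.2.2)).2.1⟩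
  let S : ℕ → Q := fun n => Nat.rec ⟨((0:ℝ), 0), by norm_num⟩ (fun _ q => step' q) n
  set rr : ℕ → ℝ := fun n => (S n).1.1 with hrr
  set kk : ℕ → ℕ := fun n => (S (n+1)).1.2 with hkk
  have hrel : ∀ n, rr n < rr (n+1) ∧ rr (n+1) < 1 ∧ (S n).1.2 < kk n ∧
      (∫⁻ z in closedBall (0:ℂ) (rr n), (‖deriv (deriv (f (kk n))) z‖₊ : ℝ≥0∞) ∂dA) ≤
        ENNReal.ofReal (1/20) ∧
      ENNReal.ofReal (19/20) ≤
        ∫⁻ z in closedBall (0:ℂ) (rr (n+1)), (‖deriv (deriv (f (kk n))) z‖₊ : ℝ≥0∞) ∂dA := by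
    intro n
    exact Classical.choose_spec (step (S n).1 (S n).2.1 (S n).2.2)
  have hkmono : StrictMono kk := by
    apply strictMono_nat_of_lt_succ
    intro n
    exact (hrel (n+1)).2.2.1
  have hr0 : ∀ n, 0 ≤ rr n := fun n => (S n).2.1
  have hr1 : ∀ n, rr n < 1 := fun n => (S n).2.2
  have hrmono : Monotone rr := monotone_nat_of_le_succ fun n => (hrel n).1.le
  -- annuli
  set A : ℕ → Set ℂ := fun n => closedBall (0:ℂ) (rr (n+1)) \ closedBall (0:ℂ) (rr n)
    with hA
  have hAmeas : ∀ n, MeasurableSet (A n) :=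
    fun n => measurableSet_closedBall.diff measurableSet_closedBall
  have hAdisj : ∀ z m n, z ∈ A m → z ∈ A n → m = n := by
    intro z m n hm hn
    by_contra hne
    rcases Nat.lt_or_ge m n with hlt | hge
    · exact hn.2 (closedBall_subset_closedBall (hrmono hlt) hm.1)
    · have hlt : n < m := by omega
      exact hm.2 (closedBall_subset_closedBall (hrmono hlt) hn.1)
  -- the sign functions and h
  set u : ℕ → ℂ → ℂ := fun n z =>
    (starRingEnd ℂ) (deriv (deriv (f (kk n))) z) / ((‖deriv (deriv (f (kk n))) z‖ : ℝ) : ℂ)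
    with hu
  have hu_meas : ∀ n, Measurable (u n) := by
    intro n
    exact (Complex.continuous_conj.measurable.comp (hGm _)).div
      (Complex.measurable_ofReal.comp (hGm _).norm)
  have hu_mul : ∀ w : ℂ, w * ((starRingEnd ℂ) w / ((‖w‖ : ℝ) : ℂ)) = ((‖w‖ : ℝ) : ℂ) := by
    intro w
    rcases eq_or_ne w 0 with rfl | hw
    · simp
    · have h0 : ((‖w‖ : ℝ) : ℂ) ≠ 0 := by
        simpa using norm_ne_zero_iff.mpr hw
      rw [mul_div_assoc', Complex.mul_conj, div_eq_iff h0]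
      norm_cast
      simp [Complex.normSq_eq_norm_sq, sq]
  have hu_bdd : ∀ n z, ‖u n z‖ ≤ 1 := by
    intro n z
    rw [hu]
    simp only [norm_div, Complex.norm_conj, Complex.norm_real, norm_norm]
    exact div_self_le_one _
  set h : ℂ → ℂ := fun z => ∑' n, (A n).indicator (u n) z with hh
  have hval1 : ∀ m z, z ∈ A m → h z = u m z := by
    intro m z hm
    have hz : h z = ∑' n, (A n).indicator (u n) z := rfl
    rw [hz, tsum_eq_single m]
    · exact Set.indicator_of_mem hm _
    · intro n hnm
      apply Set.indicator_of_notMem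
      intro hn
      exact hnm (hAdisj z n m hn hm)
  have hval0 : ∀ z, (∀ n, z ∉ A n) → h z = 0 := by
    intro z hz
    have hz' : h z = ∑' n, (A n).indicator (u n) z := rfl
    rw [hz']
    convert tsum_zero with n
    exact Set.indicator_of_notMem (hz n) _
  have hhbdd : ∀ z, ‖h z‖ ≤ 1 := by
    intro z
    by_cases hz : ∃ n, z ∈ A n
    · obtain ⟨n, hn⟩ := hz
      rw [hval1 n z hn]; exact hu_bdd n z
    · push_neg at hz
      rw [hval0 z hz]; simp
  have hhmeas : Measurable h := by
    apply measurable_of_tendsto_metrizable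
      (f := fun N z => ∑ n ∈ Finset.range N, (A n).indicator (u n) z)
    · intro N
      exact Finset.measurable_sum _ fun n _ => (hu_meas n).indicator (hAmeas n)
    · rw [tendsto_pi_nhds]
      intro z
      by_cases hz : ∃ m, z ∈ A m
      · obtain ⟨m, hm⟩ := hz
        apply tendsto_atTop_of_eventually_const (i₀ := m + 1)
        intro N hN
        rw [hval1 m z hm]
        rw [Finset.sum_eq_single_of_mem m (Finset.mem_range.mpr hN)]
        · exact Set.indicator_of_mem hm _
        · intro n _ hnm
          exact Set.indicator_of_notMem (fun hn => hnm (hAdisj z n m hn hm)) _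
      · push_neg at hz
        apply tendsto_atTop_of_eventually_const (i₀ := 0)
        intro N _
        rw [hval0 z hz]
        exact Finset.sum_eq_zero fun n _ => Set.indicator_of_notMem (hz n) _
  refine ⟨h, kk, hhmeas, hhbdd, hkmono, ?_⟩
  intro n
  have hmass : ENNReal.ofReal (9/10) ≤
      ∫⁻ z in A n, (‖deriv (deriv (f (kk n))) z‖₊ : ℝ≥0∞) ∂dA :=
    aux_annulus _ _ _ (hrel n).1.le (hrel n).2.2.2.1 (hrel n).2.2.2.2
  apply aux_main _ (hGm (kk n)) (hint (kk n)) (hnn (kk n)) (A n) (hAmeas n) hmass h hhmeas hhbdd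
  intro z hz
  rw [hval1 n z hz]
  exact hu_mul _
end

section
/- Let f be analytic on 𝔻 with ∫_𝔻 |f''(α)| dA(α) < ∞. Then for every z ∈ 𝔻: f(z) = f(0) + f'(0)·z − ∫_𝔻 (φ_α(z)/conj(α))·f''(α) dA(α), where the integrand is defined for α ≠ 0. -/
open MeasureTheory Metric Complex

/-- The Möbius map `φ_a(z) = (a - z)/(1 - conj a · z)`. -/
noncomputable def phi (a z : ℂ) : ℂ := (a - z) / (1 - (starRingEnd ℂ) a * z)

section Helpers

open Set Real

private noncomputable def Bmat (p : ℝ × ℝ) : ℝ × ℝ →L[ℝ] ℝ × ℝ :=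
  LinearMap.toContinuousLinearMap (Matrix.toLin (Module.Basis.finTwoProd ℝ) (Module.Basis.finTwoProd ℝ)
    !![Real.cos p.2, -p.1 * Real.sin p.2; Real.sin p.2, p.1 * Real.cos p.2])

lemma Bmat_det (p : ℝ × ℝ) : (Bmat p).det = p.1 := by
  conv_rhs => rw [← one_mul p.1, ← Real.cos_sq_add_sin_sq p.2]
  simp only [Bmat, neg_mul, LinearMap.det_toContinuousLinearMap, LinearMap.det_toLin,
    Matrix.det_fin_two_of, sub_neg_eq_add]
  ring

lemma polar_setIntegral {E : Type*} [NormedAddCommGroup E] [NormedSpace ℝ E]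
    {s : Set (ℝ × ℝ)} (hs : MeasurableSet s) (hsub : s ⊆ polarCoord.target)
    (h : ℂ → E) :
    (∫ x in Complex.polarCoord.symm '' s, h x) = ∫ p in s, |p.1| • h (Complex.polarCoord.symm p) := by
  have himg : Complex.polarCoord.symm '' s =
      Complex.measurableEquivRealProd.symm '' (polarCoord.symm '' s) := by
    rw [← Set.image_comp]; rfl
  rw [himg, MeasurePreserving.setIntegral_image_emb
      Complex.volume_preserving_equiv_real_prod.symm
      Complex.measurableEquivRealProd.symm.measurableEmbedding h _,
    integral_image_eq_integral_abs_det_fderiv_smul volume hs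
      (fun p _ => (hasFDerivAt_polarCoord_symm p).hasFDerivWithinAt)
      (polarCoord.symm.injOn.mono hsub) _]
  refine setIntegral_congr_fun hs fun p _ => ?_
  have hd := Bmat_det p
  simp only [Bmat] at hd
  rw [det_fderivPolarCoordSymm]
  rfl

lemma polar_integrableOn {E : Type*} [NormedAddCommGroup E] [NormedSpace ℝ E]
    {s : Set (ℝ × ℝ)} (hs : MeasurableSet s) (hsub : s ⊆ polarCoord.target)
    (h : ℂ → E) :
    IntegrableOn h (Complex.polarCoord.symm '' s) volume ↔
      IntegrableOn (fun p => |p.1| • h (Complex.polarCoord.symm p)) s volume := by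
  have himg : Complex.polarCoord.symm '' s =
      Complex.measurableEquivRealProd.symm '' (polarCoord.symm '' s) := by
    rw [← Set.image_comp]; rfl
  rw [himg, MeasurePreserving.integrableOn_image
      Complex.volume_preserving_equiv_real_prod.symm
      Complex.measurableEquivRealProd.symm.measurableEmbedding,
    integrableOn_image_iff_integrableOn_abs_det_fderiv_smul volume hs
      (fun p _ => (hasFDerivAt_polarCoord_symm p).hasFDerivWithinAt)
      (polarCoord.symm.injOn.mono hsub) _]
  constructor <;> intro H <;> refine H.congr_fun (fun p _ => ?_) hs <;>
    · have hd := Bmat_det p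
      simp only [Bmat] at hd
      simp only [det_fderivPolarCoordSymm, Function.comp_apply]
      rfl


lemma slit_compl_null : volume ((slitPlane : Set ℂ)ᶜ) = 0 := by
  have hnull : volume ((polarCoord.source)ᶜ) = 0 := ae_eq_univ.mp polarCoord_source_ae_eq_univ
  have hpre : (slitPlane : Set ℂ)ᶜ =
      Complex.measurableEquivRealProd ⁻¹' (polarCoord.source)ᶜ := by
    ext z
    simp [Complex.mem_slitPlane_iff, polarCoord_source, Complex.measurableEquivRealProd,
      Complex.equivRealProd, not_or]
  rw [hpre, Complex.volume_preserving_equiv_real_prod.measure_preimage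
    (MeasureTheory.NullMeasurableSet.of_null hnull)]
  exact hnull

lemma image_polar_disk :
    Complex.polarCoord.symm '' (Ioo (0:ℝ) 1 ×ˢ Ioo (-π) π) = ball (0:ℂ) 1 ∩ slitPlane := by
  ext z
  constructor
  · rintro ⟨⟨r, θ⟩, ⟨hr, hθ⟩, rfl⟩
    simp only [mem_Ioo] at hr hθ
    constructor
    · rw [mem_ball, dist_zero_right]
      have : ‖Complex.polarCoord.symm (r, θ)‖ = |r| := by
        exact Complex.norm_polarCoord_symm (r, θ)
      rw [this, abs_of_pos hr.1]
      exact hr.2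
    · have : ((r, θ) : ℝ × ℝ) ∈ Complex.polarCoord.target := by
        rw [Complex.polarCoord_target]
        exact ⟨hr.1, hθ⟩
      simpa [Complex.polarCoord_source] using Complex.polarCoord.map_target this
  · rintro ⟨hz1, hz2⟩
    refine ⟨(‖z‖, Complex.arg z), ?_, ?_⟩
    · have hz0 : z ≠ 0 := fun h => by simp [h, Complex.mem_slitPlane_iff] at hz2
      refine ⟨⟨?_, ?_⟩, ⟨Complex.neg_pi_lt_arg z, ?_⟩⟩
      · exact norm_pos_iff.mpr hz0
      · simpa [mem_ball, dist_zero_right] using hz1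
      · rw [Complex.arg_lt_pi_iff]
        rcases Complex.mem_slitPlane_iff.mp hz2 with h | h
        · exact Or.inl h.le
        · exact Or.inr h
    · have : Complex.polarCoord z = (‖z‖, Complex.arg z) := Complex.polarCoord_apply z
      rw [← this]
      exact Complex.polarCoord.left_inv (by rwa [Complex.polarCoord_source])



lemma norm_phi_le_one {a z : ℂ} (ha : ‖a‖ < 1) (hz : ‖z‖ < 1) :
    ‖phi a z‖ ≤ 1 := by
  have hden : ‖a - z‖ ≤ ‖1 - (starRingEnd ℂ) a * z‖ := by
    have h1 : Complex.normSq (1 - (starRingEnd ℂ) a * z) - Complex.normSq (a - z)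
        = (1 - Complex.normSq a) * (1 - Complex.normSq z) := by
      simp only [Complex.normSq_sub, Complex.normSq_one, Complex.normSq_mul,
        Complex.normSq_conj]
      have : ((1 : ℂ) * (starRingEnd ℂ) ((starRingEnd ℂ) a * z)).re
          = (a * (starRingEnd ℂ) z).re := by
        simp [mul_comm]
      rw [this]
      ring
    have ha2 : Complex.normSq a < 1 := by
      rw [← Complex.sq_norm] ; nlinarith [norm_nonneg a]
    have hz2 : Complex.normSq z < 1 := by
      rw [← Complex.sq_norm] ; nlinarith [norm_nonneg z]
    have := mul_pos (by linarith : (0:ℝ) < 1 - Complex.normSq a)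
      (by linarith : (0:ℝ) < 1 - Complex.normSq z)
    have h2 : Complex.normSq (a - z) ≤ Complex.normSq (1 - (starRingEnd ℂ) a * z) := by linarith
    have := Real.sqrt_le_sqrt h2
    simpa [Complex.norm_def] using this
  rw [phi, norm_div]
  rcases eq_or_lt_of_le (norm_nonneg (1 - (starRingEnd ℂ) a * z)) with h | h
  · rw [← h]; simp
  · rw [div_le_one h]; exact hden

lemma ball_ae_eq_inter_slit :
    (ball (0:ℂ) 1 : Set ℂ) =ᵐ[volume] ((ball (0:ℂ) 1 ∩ slitPlane : Set ℂ)) := by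
  rw [MeasureTheory.ae_eq_set]
  constructor
  · refine measure_mono_null (fun z hz => ?_) slit_compl_null
    exact fun h => hz.2 ⟨hz.1, h⟩
  · simp [Set.diff_eq_empty.mpr Set.inter_subset_left]

lemma volume_prod_s_lt_top :
    volume (Ioo (0:ℝ) 1 ×ˢ Ioo (-π) π) < ⊤ := by
  rw [MeasureTheory.Measure.volume_eq_prod, MeasureTheory.Measure.prod_prod]
  simp only [Real.volume_Ioo]
  exact ENNReal.mul_lt_top ENNReal.ofReal_lt_top ENNReal.ofReal_lt_top

lemma integrableOn_inv_norm_disk : IntegrableOn (fun z : ℂ => ‖z‖⁻¹) (ball (0:ℂ) 1) volume := by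
  rw [IntegrableOn, Measure.restrict_congr_set ball_ae_eq_inter_slit, ← image_polar_disk,
    ← IntegrableOn]
  rw [polar_integrableOn (measurableSet_Ioo.prod measurableSet_Ioo)
    (fun p hp => ⟨hp.1.1, hp.2⟩) _]
  have : IntegrableOn (fun _ : ℝ × ℝ => (1:ℝ)) (Ioo (0:ℝ) 1 ×ˢ Ioo (-π) π) volume :=
    integrableOn_const volume_prod_s_lt_top.ne
  refine this.congr_fun (fun p hp => ?_) (measurableSet_Ioo.prod measurableSet_Ioo)
  have hr : (0:ℝ) < p.1 := hp.1.1
  have : ‖Complex.polarCoord.symm p‖ = |p.1| := by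
    exact Complex.norm_polarCoord_symm p
  rw [smul_eq_mul, this, abs_of_pos hr, mul_inv_cancel₀ hr.ne']

lemma circle_avg {g : ℂ → ℂ} (hg : DifferentiableOn ℂ g (ball (0:ℂ) 1)) {z : ℂ}
    (hz : ‖z‖ < 1) {r : ℝ} (hr : 0 < r) (hr1 : r < 1) :
    ∫ θ in (0:ℝ)..(2*π), (phi (circleMap 0 r θ) z / (starRingEnd ℂ) (circleMap 0 r θ))
        * g (circleMap 0 r θ)
      = ((2*π:ℝ):ℂ) * (z^2*(((r:ℝ):ℂ)^2-1)*g (((r:ℝ):ℂ)^2*z)) := by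
  set w : ℂ := ((r:ℝ):ℂ)^2 * z with hw_def
  set F : ℂ → ℂ := fun α => α * (α - z) * g α / ((r:ℝ):ℂ)^2 with hF_def
  have hrC : (((r:ℝ):ℂ))^2 ≠ 0 := pow_ne_zero 2 (Complex.ofReal_ne_zero.mpr hr.ne')
  have hw : w ∈ ball (0:ℂ) r := by
    simp only [mem_ball, dist_zero_right, hw_def, norm_mul, norm_pow,
      Complex.norm_real, Real.norm_eq_abs, abs_of_pos hr]
    calc r^2 * ‖z‖ < r^2 * 1 := by
          apply mul_lt_mul_of_pos_left hz (by positivity)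
      _ ≤ r := by nlinarith
  have hsub : closedBall (0:ℂ) r ⊆ ball (0:ℂ) 1 := closedBall_subset_ball hr1
  have hF : DiffContOnCl ℂ F (ball (0:ℂ) r) := by
    apply DifferentiableOn.diffContOnCl
    rw [closure_ball (0:ℂ) hr.ne']
    exact ((differentiableOn_id.mul (differentiableOn_id.sub (differentiableOn_const z))).mul
      (hg.mono hsub)).div_const _
  have hC := hF.circleIntegral_sub_inv_smul hw
  simp only [circleIntegral, deriv_circleMap, smul_eq_mul] at hC
  have hpt : ∀ θ : ℝ, phi (circleMap 0 r θ) z / (starRingEnd ℂ) (circleMap 0 r θ)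
      * g (circleMap 0 r θ)
      = (-Complex.I) * (circleMap 0 r θ * Complex.I *
          ((circleMap 0 r θ - w)⁻¹ * F (circleMap 0 r θ))) := by
    intro θ
    set ζ : ℂ := circleMap 0 r θ with hζ_def
    have hζ : ζ ≠ 0 := circleMap_ne_center hr.ne'
    have habs : ‖ζ‖ = r := by
      rw [hζ_def, norm_circleMap_zero, abs_of_pos hr]
    have hc : (starRingEnd ℂ) ζ * ζ = ((r:ℝ):ℂ)^2 := by
      rw [mul_comm, Complex.mul_conj, Complex.normSq_eq_norm_sq, habs]
      push_cast
      ring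
    have hζw : ζ - w ≠ 0 := by
      rw [sub_ne_zero]
      intro h
      have : ‖w‖ < r := by simpa [dist_zero_right] using hw
      rw [← h, habs] at this
      exact lt_irrefl _ this
    have hcval : (starRingEnd ℂ) ζ = ((r:ℝ):ℂ)^2 / ζ := (eq_div_iff hζ).mpr hc
    have h1 : (1 : ℂ) - (starRingEnd ℂ) ζ * z ≠ 0 := by
      have habs2 : ‖(starRingEnd ℂ) ζ * z‖ < 1 := by
        rw [norm_mul, Complex.norm_conj, habs]
        nlinarith [norm_nonneg z, norm_nonneg z]
      intro h
      rw [sub_eq_zero] at h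
      rw [← h] at habs2
      simp at habs2
    rw [phi, div_div, hcval] at *
    simp only [hF_def]
    rw [hw_def] at hζw ⊢
    field_simp
    linear_combination ((ζ - z) * g ζ * (ζ * ((r:ℝ):ℂ)^2 - z * ((r:ℝ):ℂ)^4)⁻¹) * Complex.I_sq
  calc (∫ θ in (0:ℝ)..(2*π), phi (circleMap 0 r θ) z / (starRingEnd ℂ) (circleMap 0 r θ)
        * g (circleMap 0 r θ))
      = ∫ θ in (0:ℝ)..(2*π), (-Complex.I) * (circleMap 0 r θ * Complex.I *
          ((circleMap 0 r θ - w)⁻¹ * F (circleMap 0 r θ))) :=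
        intervalIntegral.integral_congr (fun θ _ => hpt θ)
    _ = (-Complex.I) * ∫ θ in (0:ℝ)..(2*π), (circleMap 0 r θ * Complex.I *
          ((circleMap 0 r θ - w)⁻¹ * F (circleMap 0 r θ))) :=
        intervalIntegral.integral_const_mul _ _
    _ = (-Complex.I) * (2*(π:ℂ)*Complex.I * F w) := by rw [hC]
    _ = 2*(π:ℂ) * F w := by
        linear_combination (-2*(π:ℂ)*F w) * Complex.I_sq
    _ = ((2*π:ℝ):ℂ) * (z^2*(((r:ℝ):ℂ)^2-1)*g (((r:ℝ):ℂ)^2*z)) := by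
        simp only [hF_def, hw_def]
        push_cast
        field_simp [Complex.ofReal_ne_zero.mpr hr.ne']

lemma symm_eq_circleMap (r θ : ℝ) : Complex.polarCoord.symm (r, θ) = circleMap 0 r θ := by
  rw [Complex.polarCoord_symm_apply]
  simp [circleMap, Complex.exp_mul_I, ← Complex.ofReal_cos, ← Complex.ofReal_sin]

lemma integral_Ioo_pi (h : ℂ → ℂ) (r : ℝ) :
    (∫ θ in Ioo (-π) π, h (circleMap 0 r θ)) = ∫ θ in (0:ℝ)..(2*π), h (circleMap 0 r θ) := by
  have hper : Function.Periodic (fun θ => h (circleMap 0 r θ)) (2*π) :=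
    (periodic_circleMap 0 r).comp h
  have h1 : (∫ θ in Ioo (-π) π, h (circleMap 0 r θ))
      = ∫ θ in (-π)..π, h (circleMap 0 r θ) := by
    rw [intervalIntegral.integral_of_le (by linarith [Real.pi_pos]),
      MeasureTheory.integral_Ioc_eq_integral_Ioo]
  rw [h1]
  have h3 := hper.intervalIntegral_add_eq (-π) 0
  rw [zero_add] at h3
  have h4 : -π + 2*π = π := by ring
  rw [h4] at h3
  exact h3

lemma ftc_radial {f : ℂ → ℂ} (hf : DifferentiableOn ℂ f (ball (0:ℂ) 1)) {z : ℂ}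
    (hz : ‖z‖ < 1) :
    (∫ t in (0:ℝ)..1, ((2*t:ℝ):ℂ) * (z^2*(((t:ℝ):ℂ)^2-1) *
        deriv (deriv f) (((t:ℝ):ℂ)^2*z)))
      = f 0 + z * deriv f 0 - f z := by
  have hA : AnalyticOnNhd ℂ f (ball (0:ℂ) 1) := hf.analyticOnNhd isOpen_ball
  have hA1 : AnalyticOnNhd ℂ (deriv f) (ball (0:ℂ) 1) := hA.deriv
  have hA2 : AnalyticOnNhd ℂ (deriv (deriv f)) (ball (0:ℂ) 1) := hA1.deriv
  set Φ : ℝ → ℂ := fun t => (((t:ℝ):ℂ)^2-1) * z * deriv f (((t:ℝ):ℂ)^2*z) - f (((t:ℝ):ℂ)^2*z)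
    with hΦ_def
  have hmem : ∀ t : ℝ, t ∈ uIcc (0:ℝ) 1 → ((t:ℝ):ℂ)^2*z ∈ ball (0:ℂ) 1 := by
    intro t ht
    rw [uIcc_of_le (by norm_num), mem_Icc] at ht
    rw [mem_ball, dist_zero_right, norm_mul, norm_pow,
      Complex.norm_real, Real.norm_eq_abs, _root_.abs_of_nonneg ht.1]
    have ht2 : t^2 ≤ 1 := by nlinarith
    nlinarith [norm_nonneg z]
  have hcurve : ∀ t : ℝ, HasDerivAt (fun s : ℝ => ((s:ℝ):ℂ)^2*z) (((2*t:ℝ):ℂ)*z) t := by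
    intro t
    have h2 := (Complex.ofRealCLM.hasFDerivAt.comp_hasDerivAt t (hasDerivAt_pow 2 t)).mul_const z
    have hfun : (fun s : ℝ => (((s:ℝ):ℂ))^2*z) = (fun s : ℝ => Complex.ofRealCLM (s^2) * z) := by
      funext s
      simp [Complex.ofRealCLM_apply]
    rw [hfun]
    refine h2.congr_deriv ?_
    simp [Complex.ofRealCLM_apply]
  have hderiv : ∀ t ∈ uIcc (0:ℝ) 1, HasDerivAt Φ
      (((2*t:ℝ):ℂ) * (z^2*(((t:ℝ):ℂ)^2-1) * deriv (deriv f) (((t:ℝ):ℂ)^2*z))) t := by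
    intro t ht
    have hp := hmem t ht
    have hdf : HasDerivAt f (deriv f (((t:ℝ):ℂ)^2*z)) (((t:ℝ):ℂ)^2*z) :=
      ((hA _ hp).differentiableAt).hasDerivAt
    have hdf1 : HasDerivAt (deriv f) (deriv (deriv f) (((t:ℝ):ℂ)^2*z)) (((t:ℝ):ℂ)^2*z) :=
      ((hA1 _ hp).differentiableAt).hasDerivAt
    have hcomp : HasDerivAt (fun s : ℝ => f (((s:ℝ):ℂ)^2*z))
        (((2*t:ℝ):ℂ)*z * deriv f (((t:ℝ):ℂ)^2*z)) t := by
      have := (hdf.hasFDerivAt.restrictScalars ℝ).comp_hasDerivAt t (hcurve t)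
      simpa [mul_comm, Function.comp_def] using this
    have hcomp1 : HasDerivAt (fun s : ℝ => deriv f (((s:ℝ):ℂ)^2*z))
        (((2*t:ℝ):ℂ)*z * deriv (deriv f) (((t:ℝ):ℂ)^2*z)) t := by
      have := (hdf1.hasFDerivAt.restrictScalars ℝ).comp_hasDerivAt t (hcurve t)
      simpa [mul_comm, Function.comp_def] using this
    have hsq : HasDerivAt (fun s : ℝ => (((s:ℝ):ℂ)^2-1) * z) (((2*t:ℝ):ℂ)*z) t := by
      have h2 := ((Complex.ofRealCLM.hasFDerivAt.comp_hasDerivAt t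
        (hasDerivAt_pow 2 t)).sub_const 1).mul_const z
      have hfun : (fun s : ℝ => ((((s:ℝ):ℂ))^2-1)*z)
          = (fun s : ℝ => (Complex.ofRealCLM (s^2) - 1) * z) := by
        funext s
        simp [Complex.ofRealCLM_apply]
      rw [hfun]
      refine h2.congr_deriv ?_
      simp [Complex.ofRealCLM_apply]
    have := (hsq.mul hcomp1).sub hcomp
    refine this.congr_deriv ?_
    push_cast
    ring
  have hcont : ContinuousOn (fun t : ℝ => ((2*t:ℝ):ℂ) * (z^2*(((t:ℝ):ℂ)^2-1) *
      deriv (deriv f) (((t:ℝ):ℂ)^2*z))) (uIcc (0:ℝ) 1) := by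
    apply ContinuousOn.mul
    · fun_prop
    · apply ContinuousOn.mul (by fun_prop)
      exact (hA2.continuousOn (s := ball 0 1)).comp (by fun_prop) hmem
  rw [intervalIntegral.integral_eq_sub_of_hasDerivAt hderiv
    (hcont.intervalIntegrable)]
  simp only [hΦ_def]
  push_cast
  norm_num
  ring

end Helpers

open Set Real in
theorem stmt11 (f : ℂ → ℂ) (hf : DifferentiableOn ℂ f (ball (0:ℂ) 1))
    (hint : (∫⁻ α, ENNReal.ofReal ‖deriv (deriv f) α‖ ∂dA) < ⊤) :
    ∀ z ∈ ball (0:ℂ) 1,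
      f z = f 0 + deriv f 0 * z -
        ∫ α, (phi α z / (starRingEnd ℂ) α) * deriv (deriv f) α ∂dA := by
  intro z hzmem
  have hz : ‖z‖ < 1 := by simpa [mem_ball, dist_zero_right] using hzmem
  set g : ℂ → ℂ := deriv (deriv f) with hg_def
  have hA : AnalyticOnNhd ℂ f (ball (0:ℂ) 1) := hf.analyticOnNhd isOpen_ball
  have hA2 : AnalyticOnNhd ℂ g (ball (0:ℂ) 1) := hA.deriv.deriv
  have hgdiff : DifferentiableOn ℂ g (ball (0:ℂ) 1) := hA2.differentiableOn
  have hgcont : ContinuousOn g (ball (0:ℂ) 1) := hgdiff.continuousOn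
  set K : ℂ → ℂ := fun α => phi α z / (starRingEnd ℂ) α with hK_def
  set h : ℂ → ℂ := fun α => K α * g α with hh_def
  -- (ii) g is integrable on the ball
  have hπ0 : (ENNReal.ofReal Real.pi)⁻¹ ≠ 0 := by
    simp [ENNReal.inv_ne_zero]
  have hgint : IntegrableOn g (ball (0:ℂ) 1) volume := by
    rw [dA, lintegral_smul_measure] at hint
    have hL : (∫⁻ α, ENNReal.ofReal (‖g α‖) ∂(volume.restrict (ball (0:ℂ) 1))) < ⊤ := by
      by_contra hcon
      push_neg at hcon
      rw [top_le_iff.mp hcon, smul_eq_mul, ENNReal.mul_top hπ0] at hint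
      exact (lt_irrefl _ hint)
    refine ⟨(measurable_deriv _).aestronglyMeasurable, ?_⟩
    rw [HasFiniteIntegral]
    simp only [← ofReal_norm]
    exact hL
  -- (iii) majorant integrable
  have hmaj : IntegrableOn (fun α : ℂ => ‖α‖⁻¹ * ‖g α‖) (ball (0:ℂ) 1) volume := by
    have hcover : ball (0:ℂ) 1 ⊆ ball (0:ℂ) (1/2) ∪ (ball (0:ℂ) 1 \ ball (0:ℂ) (1/2)) := by
      intro α hα
      by_cases hc : α ∈ ball (0:ℂ) (1/2)
      · exact Or.inl hc
      · exact Or.inr ⟨hα, hc⟩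
    refine IntegrableOn.mono_set (IntegrableOn.union ?_ ?_) hcover
    · -- near 0 : g bounded
      obtain ⟨M, hM⟩ := (isCompact_closedBall (0:ℂ) (1/2)).exists_bound_of_continuousOn
        (hgcont.mono (closedBall_subset_ball (by norm_num)))
      have hmeas : AEStronglyMeasurable (fun α : ℂ => ‖α‖⁻¹ * ‖g α‖)
          (volume.restrict (ball (0:ℂ) (1/2))) := by
        exact ((measurable_norm.inv).mul (measurable_deriv _).norm).aestronglyMeasurable
      refine Integrable.mono' (g := fun α : ℂ => M * ‖α‖⁻¹)
        ((integrableOn_inv_norm_disk.mono_set (ball_subset_ball (by norm_num))).const_mul M)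
        hmeas ?_
      filter_upwards [ae_restrict_mem measurableSet_ball] with α hα
      have h1 : ‖g α‖ ≤ M := hM α (ball_subset_closedBall hα)
      have h2 : (0:ℝ) ≤ ‖α‖⁻¹ := by positivity
      rw [Real.norm_eq_abs, _root_.abs_of_nonneg (by positivity)]
      calc ‖α‖⁻¹ * ‖g α‖ ≤ ‖α‖⁻¹ * M := by nlinarith [norm_nonneg (g α)]
        _ = M * ‖α‖⁻¹ := by ring
    · -- away from 0 : ‖α‖⁻¹ ≤ 2
      have hmeas : AEStronglyMeasurable (fun α : ℂ => ‖α‖⁻¹ * ‖g α‖)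
          (volume.restrict (ball (0:ℂ) 1 \ ball (0:ℂ) (1/2))) := by
        exact ((measurable_norm.inv).mul (measurable_deriv _).norm).aestronglyMeasurable
      have hgint2 : IntegrableOn (fun x => 2 * ‖g x‖) (ball (0:ℂ) 1) volume :=
        hgint.norm.const_mul 2
      refine Integrable.mono' (g := fun α : ℂ => 2 * ‖g α‖)
        (hgint2.mono_set diff_subset) hmeas ?_
      filter_upwards [ae_restrict_mem (measurableSet_ball.diff measurableSet_ball)] with α hα
      have h1 : (1/2:ℝ) ≤ ‖α‖ := by
        by_contra hcon
        push_neg at hcon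
        exact hα.2 (by simpa [mem_ball, dist_zero_right] using hcon)
      have h2 : ‖α‖⁻¹ ≤ 2 := by
        rw [inv_le_comm₀ (by linarith) (by norm_num)]
        linarith
      rw [Real.norm_eq_abs, _root_.abs_of_nonneg (by positivity)]
      nlinarith [norm_nonneg (g α)]
  -- (iv) a.e. strong measurability of h on the ball
  have hmeash : AEStronglyMeasurable h (volume.restrict (ball (0:ℂ) 1)) := by
    have hnull : volume ({(0:ℂ)} : Set ℂ) = 0 := by simp
    have hsetae : (ball (0:ℂ) 1 : Set ℂ) =ᵐ[volume] ((ball (0:ℂ) 1 \ {0} : Set ℂ)) := by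
      rw [MeasureTheory.ae_eq_set]
      refine ⟨measure_mono_null (fun α hα => ?_) hnull, ?_⟩
      · have h2 := hα.2
        simp only [mem_diff, mem_singleton_iff, not_and, not_not] at h2
        simpa using h2 hα.1
      · simp [Set.diff_subset]
    rw [Measure.restrict_congr_set hsetae]
    have hcont : ContinuousOn h (ball (0:ℂ) 1 \ {0}) := by
      have hKcont : ContinuousOn K (ball (0:ℂ) 1 \ {0}) := by
        apply ContinuousOn.div
        · apply ContinuousOn.div
          · exact (continuous_id.sub continuous_const).continuousOn
          · exact (continuous_const.sub ((RCLike.continuous_conj (K := ℂ)).mul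
              continuous_const)).continuousOn
          · intro α hα
            have : ‖(starRingEnd ℂ) α * z‖ < 1 := by
              rw [norm_mul, Complex.norm_conj]
              have hα1 : ‖α‖ < 1 := by
                simpa [mem_ball, dist_zero_right] using hα.1
              nlinarith [norm_nonneg α, norm_nonneg z,
                mul_le_of_le_one_right (norm_nonneg α) hz.le]
            intro hcon
            rw [sub_eq_zero] at hcon
            rw [← hcon] at this
            simp at this
        · exact (RCLike.continuous_conj (K := ℂ)).continuousOn
        · intro α hα
          simpa using hα.2
      exact hKcont.mul (hgcont.mono diff_subset)
    exact hcont.aestronglyMeasurable (measurableSet_ball.diff (measurableSet_singleton 0))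
  -- (v) h integrable on ball
  have hhint : IntegrableOn h (ball (0:ℂ) 1) volume := by
    refine Integrable.mono' hmaj hmeash ?_
    have h0 : ∀ᵐ α ∂(volume.restrict (ball (0:ℂ) 1)), α ≠ 0 := by
      rw [ae_iff]
      have hsub : {α : ℂ | ¬ α ≠ 0} ⊆ ({0} : Set ℂ) := fun α hα => by simpa using hα
      refine measure_mono_null hsub ?_
      exact le_antisymm (le_trans (Measure.restrict_apply_le _ _) (by simp)) zero_le
    filter_upwards [ae_restrict_mem measurableSet_ball, h0] with α hα hα0
    have hα1 : ‖α‖ < 1 := by simpa [mem_ball, dist_zero_right] using hα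
    have habs : ‖K α‖ ≤ ‖α‖⁻¹ := by
      rw [hK_def]
      simp only [norm_div, Complex.norm_conj]
      rw [div_le_iff₀ (norm_pos_iff.mpr hα0)]
      have := norm_phi_le_one hα1 hz
      rw [inv_mul_cancel₀ (norm_ne_zero_iff.mpr hα0)]
      exact this
    calc ‖h α‖ = ‖K α‖ * ‖g α‖ := by
          rw [hh_def]; simp [norm_mul]
      _ ≤ ‖α‖⁻¹ * ‖g α‖ := by nlinarith [norm_nonneg (g α), norm_nonneg (K α)]
  -- (vi) change to polar coordinates
  set s : Set (ℝ × ℝ) := Ioo (0:ℝ) 1 ×ˢ Ioo (-π) π with hs_def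
  have hs_meas : MeasurableSet s := measurableSet_Ioo.prod measurableSet_Ioo
  have hs_sub : s ⊆ polarCoord.target := fun p hp => ⟨hp.1.1, hp.2⟩
  have step1 : (∫ α in ball (0:ℂ) 1, h α) = ∫ p in s, |p.1| • h (Complex.polarCoord.symm p) := by
    rw [← polar_setIntegral hs_meas hs_sub h, image_polar_disk,
      ← Measure.restrict_congr_set ball_ae_eq_inter_slit]
  have hprod_int : IntegrableOn (fun p => |p.1| • h (Complex.polarCoord.symm p)) s volume := by
    rw [← polar_integrableOn hs_meas hs_sub h, image_polar_disk]
    exact hhint.mono_set inter_subset_left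
  have step2 : (∫ p in s, |p.1| • h (Complex.polarCoord.symm p))
      = ∫ r in Ioo (0:ℝ) 1, ∫ θ in Ioo (-π) π, |r| • h (Complex.polarCoord.symm (r, θ)) := by
    rw [hs_def] at hprod_int ⊢
    rw [Measure.volume_eq_prod] at hprod_int ⊢
    exact setIntegral_prod _ hprod_int
  have step3 : (∫ r in Ioo (0:ℝ) 1, ∫ θ in Ioo (-π) π, |r| • h (Complex.polarCoord.symm (r, θ)))
      = ∫ r in Ioo (0:ℝ) 1, ((π:ℝ):ℂ) * (((2*r:ℝ):ℂ) * (z^2*(((r:ℝ):ℂ)^2-1)*g (((r:ℝ):ℂ)^2*z))) := by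
    refine setIntegral_congr_fun measurableSet_Ioo (fun r hr => ?_)
    have hr0 : (0:ℝ) < r := hr.1
    have hr1 : r < 1 := hr.2
    have hinner : (∫ θ in Ioo (-π) π, |r| • h (Complex.polarCoord.symm (r, θ)))
        = r • ∫ θ in Ioo (-π) π, h (circleMap 0 r θ) := by
      have h1 : (∫ θ in Ioo (-π) π, |r| • h (Complex.polarCoord.symm (r, θ)))
          = ∫ θ in Ioo (-π) π, r • h (circleMap 0 r θ) := by
        refine setIntegral_congr_fun measurableSet_Ioo (fun θ _ => ?_)
        rw [symm_eq_circleMap, _root_.abs_of_pos hr0]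
      rw [h1, integral_smul]
    rw [hinner, integral_Ioo_pi]
    have hca := circle_avg hgdiff hz hr0 hr1
    simp only [hh_def, hK_def]
    rw [hca, Complex.real_smul]
    push_cast
    ring
  have step4 : (∫ r in Ioo (0:ℝ) 1, ((π:ℝ):ℂ) *
        (((2*r:ℝ):ℂ) * (z^2*(((r:ℝ):ℂ)^2-1)*g (((r:ℝ):ℂ)^2*z))))
      = ((π:ℝ):ℂ) * (f 0 + z * deriv f 0 - f z) := by
    rw [MeasureTheory.integral_const_mul]
    congr 1
    rw [← ftc_radial hf hz, intervalIntegral.integral_of_le (by norm_num),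
      MeasureTheory.integral_Ioc_eq_integral_Ioo]
  -- (vii) assemble
  have hdAint : (∫ α, (phi α z / (starRingEnd ℂ) α) * g α ∂dA)
      = f 0 + z * deriv f 0 - f z := by
    rw [dA, integral_smul_measure]
    have hKg : (∫ α in ball (0:ℂ) 1, (phi α z / (starRingEnd ℂ) α) * g α)
        = ((π:ℝ):ℂ) * (f 0 + z * deriv f 0 - f z) := by
      rw [show (fun α => (phi α z / (starRingEnd ℂ) α) * g α) = h from rfl] at *
      rw [step1, step2, step3, step4]
    rw [hKg]
    have hπ : ((ENNReal.ofReal Real.pi)⁻¹).toReal = π⁻¹ := by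
      rw [ENNReal.toReal_inv, ENNReal.toReal_ofReal Real.pi_pos.le]
    rw [hπ, Complex.real_smul]
    push_cast
    rw [← mul_assoc]
    rw [show ((π:ℝ):ℂ)⁻¹ * ((π:ℝ):ℂ) = 1 from
      inv_mul_cancel₀ (Complex.ofReal_ne_zero.mpr Real.pi_pos.ne')]
    ring
  rw [hdAint]
  ring
end
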